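/- arXiv:2406.12097 — 3 statements merged into one kernel-verified Lean document; each statement's English description precedes it below -/
import Mathlib

section
/- There is a constant κ₁ > 10 such that for every κ ≥ κ₁ there exists k₀ = k₀(κ) > 0 with the following property. In the setting of the Whitney decomposition 𝒲 and the cluster balls {B_C}_{C∈𝒞} with ε ≤ k₀/N, the cluster assignment Q ↦ C_Q (the cluster of maximal depth with Q ⊂ B_{C_Q}) is well defined and satisfies: (i) Δ/20 ≤ δ_Q ≤ 2K₁κ·W_{C_Q} for every Q ∈ 𝒲; (ii) if Q ∈ 𝒲_II then C_Q = {x_Q}, where x_Q is the unique point of 1.1Q ∩ E₂; (iii) if Q ∈ ∂𝒲 then C_Q = E₂. -/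
open MeasureTheory Set Metric
open scoped Classical

noncomputable section

abbrev Pt : Type := EuclideanSpace ℝ (Fin 2)

/-- The point `(a, b)` of the Euclidean plane. -/
def pt (a b : ℝ) : Pt := WithLp.toLp 2 ![a, b]

/-- `V` is an `N`-ary tree: a finite prefix-closed set of strings over the alphabet
`{0, …, N−1}` containing the empty string (the root), in which every non-leaf node
has at least `2` (and, automatically, at most `N`) children. -/
def IsNaryTree (N : ℕ) (V : Finset (List ℕ)) : Prop :=
  [] ∈ V ∧
  (∀ v ∈ V, ∀ u : List ℕ, u <+: v → u ∈ V) ∧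
  (∀ v ∈ V, ∀ i ∈ v, i < N) ∧
  (∀ v ∈ V, (∃ a : ℕ, v ++ [a] ∈ V) →
    2 ≤ ((Finset.range N).filter (fun a => v ++ [a] ∈ V)).card)

/-- `v` is a leaf of `V`. -/
def IsLeaf (V : Finset (List ℕ)) (v : List ℕ) : Prop :=
  v ∈ V ∧ ∀ a : ℕ, v ++ [a] ∉ V

/-- The tree has depth at least one, i.e. the root is not a leaf. -/
def DepthAtLeastOne (V : Finset (List ℕ)) : Prop := ∃ a : ℕ, [a] ∈ V

/-- Radially decaying weights with parameter `ε` (with the convention `W ∅ = 1`). -/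
def RadiallyDecaying (V : Finset (List ℕ)) (W : List ℕ → ℝ) (ε : ℝ) : Prop :=
  W [] = 1 ∧ (∀ v ∈ V, 0 < W v) ∧ ∀ v ∈ V, v ≠ [] → W v ≤ ε * W v.dropLast

/-- The map `Ψ(v) = ∑_{i=1}^{d(v)} W(π_{i−1}(v))·v_i/(N−1)`. -/
def Psi (N : ℕ) (W : List ℕ → ℝ) (v : List ℕ) : ℝ :=
  ∑ i ∈ Finset.range v.length, W (v.take i) * (v.getD i 0 : ℝ) / ((N : ℝ) - 1)

/-- `Δ = min_{v ∈ ∂V} W_v`. -/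
def Delta (V : Finset (List ℕ)) (W : List ℕ → ℝ) : ℝ :=
  sInf {w : ℝ | ∃ v, IsLeaf V v ∧ w = W v}

def E1set (Δ : ℝ) : Set Pt :=
  {x | (∃ n : ℤ, x 0 = (n : ℝ) * Δ) ∧ x 0 ∈ Ico (0 : ℝ) 2 ∧ x 1 = 0}

def E2set (N : ℕ) (V : Finset (List ℕ)) (W : List ℕ → ℝ) : Set Pt :=
  {x | ∃ v, IsLeaf V v ∧ x = pt (Psi N W v) (W v)}

def Eset (N : ℕ) (V : Finset (List ℕ)) (W : List ℕ → ℝ) : Set Pt :=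
  E1set (Delta V W) ∪ E2set N V W

/-- Bundle of standing hypotheses: `N ≥ 2`, `V` an `N`-ary tree, `0 < ε ≤ k₀/N`,
and radially decaying weights with parameter `ε`. -/
def TreeHyp (k₀ : ℝ) (N : ℕ) (V : Finset (List ℕ)) (W : List ℕ → ℝ) (ε : ℝ) : Prop :=
  2 ≤ N ∧ IsNaryTree N V ∧ 0 < ε ∧ ε ≤ k₀ / N ∧ RadiallyDecaying V W ε

/-- Distance between two subsets of the plane. -/
def setDist (s t : Set Pt) : ℝ := sInf {d : ℝ | ∃ x ∈ s, ∃ y ∈ t, d = dist x y}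

/-- A dyadic square arising from `Q⁰ = [−3,5)²` by `k` repeated bisections. -/
structure DSquare where
  k : ℕ
  i : ℕ
  j : ℕ
  hi : i < 2 ^ k
  hj : j < 2 ^ k

namespace DSquare

def side (Q : DSquare) : ℝ := 8 / 2 ^ Q.k

def x0 (Q : DSquare) : ℝ := -3 + Q.i * Q.side

def y0 (Q : DSquare) : ℝ := -3 + Q.j * Q.side

/-- The (half-open) square itself, as a subset of the plane. -/
def set (Q : DSquare) : Set Pt :=
  {x | x 0 ∈ Ico Q.x0 (Q.x0 + Q.side) ∧ x 1 ∈ Ico Q.y0 (Q.y0 + Q.side)}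

/-- The concentric dilate `λQ`. -/
def dil (Q : DSquare) (lam : ℝ) : Set Pt :=
  {x | |x 0 - (Q.x0 + Q.side / 2)| ≤ lam * Q.side / 2 ∧
       |x 1 - (Q.y0 + Q.side / 2)| ≤ lam * Q.side / 2}

/-- The dyadic ancestor of `Q` at generation `k' ≤ Q.k`. -/
def anc (Q : DSquare) (k' : ℕ) (h : k' ≤ Q.k) : DSquare :=
  ⟨k', Q.i / 2 ^ (Q.k - k'), Q.j / 2 ^ (Q.k - k'), by
      have h2 : 0 < 2 ^ (Q.k - k') := pow_pos (by norm_num) _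
      rw [Nat.div_lt_iff_lt_mul h2, ← pow_add, Nat.add_sub_cancel' h]
      exact Q.hi, by
      have h2 : 0 < 2 ^ (Q.k - k') := pow_pos (by norm_num) _
      rw [Nat.div_lt_iff_lt_mul h2, ← pow_add, Nat.add_sub_cancel' h]
      exact Q.hj⟩

end DSquare

def Q0set : Set Pt := {x | x 0 ∈ Ico (-3 : ℝ) 5 ∧ x 1 ∈ Ico (-3 : ℝ) 5}

/-- `Q` belongs to the Whitney decomposition `𝒲` of `Q⁰` relative to `E`:
`3Q ∩ E` has at most one point, while `3Q'' ∩ E` has at least two points for every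
proper dyadic ancestor `Q''` of `Q`. -/
def InWhitney (E : Set Pt) (Q : DSquare) : Prop :=
  (Q.dil 3 ∩ E).Subsingleton ∧
  ∀ k' : ℕ, ∀ h : k' < Q.k, ¬ ((Q.anc k' h.le).dil 3 ∩ E).Subsingleton

/-- `Q ↔ Q'`, i.e. `1.1Q ∩ 1.1Q' ≠ ∅`. -/
def Touch (Q Q' : DSquare) : Prop := (Q.dil 1.1 ∩ Q'.dil 1.1).Nonempty

/-- `‖F‖_{L^{2,p}(Ω)}^p = ∫_Ω |∇²F|^p`. -/
def sobEnergy (p : ℝ) (Ω : Set Pt) (F : Pt → ℝ) : ℝ :=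
  ∫ x in Ω, ‖iteratedFDeriv ℝ 2 F x‖ ^ p

/-- The seminorm `‖F‖_{L^{2,p}(Ω)}`. -/
def sobNorm (p : ℝ) (Ω : Set Pt) (F : Pt → ℝ) : ℝ := sobEnergy p Ω F ^ (1 / p)

/-- Membership in the homogeneous Sobolev space `L^{2,p}(ℝ²)` (we work with `C²`
representatives with finite seminorm). -/
def MemSob (p : ℝ) (F : Pt → ℝ) : Prop :=
  ContDiff ℝ 2 F ∧ Integrable fun x => ‖iteratedFDeriv ℝ 2 F x‖ ^ p

/-- The trace seminorm `‖f‖_{L^{2,p}(E)}` of `f : E → ℝ`. -/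
def traceSobNorm (p : ℝ) (E : Set Pt) (f : E → ℝ) : ℝ :=
  sInf {c : ℝ | ∃ F : Pt → ℝ, MemSob p F ∧ (∀ y : E, F y.1 = f y) ∧ c = sobNorm p univ F}

/-- `T` is a linear extension operator `L^{2,p}(E) → L^{2,p}(ℝ²)` with norm bound `M`. -/
def IsExtOpPlane (p : ℝ) (E : Set Pt) (M : ℝ) (T : (E → ℝ) →ₗ[ℝ] (Pt → ℝ)) : Prop :=
  ∀ f : E → ℝ, (∃ F : Pt → ℝ, MemSob p F ∧ ∀ y : E, F y.1 = f y) →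
    MemSob p (T f) ∧ (∀ y : E, T f y.1 = f y) ∧
      sobNorm p univ (T f) ≤ M * traceSobNorm p E f

/-- `‖Φ‖_{L^{1,p}(V)}^p = ∑_{v ∈ V₀} |Φ(v) − Φ(π(v))|^p W_v^{2−p}`. -/
def treeEnergy (p : ℝ) (V : Finset (List ℕ)) (W : List ℕ → ℝ) (Φ : List ℕ → ℝ) : ℝ :=
  ∑ v ∈ V.erase [], |Φ v - Φ v.dropLast| ^ p * W v ^ (2 - p)

def treeNorm (p : ℝ) (V : Finset (List ℕ)) (W : List ℕ → ℝ) (Φ : List ℕ → ℝ) : ℝ :=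
  treeEnergy p V W Φ ^ (1 / p)

/-- The type of leaves of `V`. -/
def Leaves (V : Finset (List ℕ)) : Type := {v : List ℕ // IsLeaf V v}

/-- The trace seminorm `‖φ‖_{L^{1,p}(∂V)}`. -/
def treeTraceNorm (p : ℝ) (V : Finset (List ℕ)) (W : List ℕ → ℝ) (φ : Leaves V → ℝ) : ℝ :=
  sInf {c : ℝ | ∃ Φ : List ℕ → ℝ, (∀ v : Leaves V, Φ v.1 = φ v) ∧ c = treeNorm p V W Φ}

/-- `H` is a linear extension operator `L^{1,p}(∂V) → L^{1,p}(V)` with norm bound `M`. -/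
def IsExtOpTree (p : ℝ) (V : Finset (List ℕ)) (W : List ℕ → ℝ) (M : ℝ)
    (H : (Leaves V → ℝ) →ₗ[ℝ] (List ℕ → ℝ)) : Prop :=
  ∀ φ : Leaves V → ℝ,
    (∀ v : Leaves V, H φ v.1 = φ v) ∧ treeNorm p V W (H φ) ≤ M * treeTraceNorm p V W φ

/-- Longest common prefix of two strings (the lowest common ancestor). -/
def lcp : List ℕ → List ℕ → List ℕ
  | a :: as, b :: bs => if a = b then a :: lcp as bs else []
  | _, _ => []

/-- The cluster `C_v ⊆ E₂` associated to a vertex `v ∈ V`. -/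
def Cluster (N : ℕ) (V : Finset (List ℕ)) (W : List ℕ → ℝ) (v : List ℕ) : Set Pt :=
  {x | ∃ u, IsLeaf V u ∧ v <+: u ∧ x = pt (Psi N W u) (W u)}

/-- The average `(∂₂G)_S` of the vertical derivative of `G` over `S`. -/
def d2avg (S : Set Pt) (G : Pt → ℝ) : ℝ :=
  ⨍ x in S, fderiv ℝ G x (EuclideanSpace.single 1 1)

end



section S15aux

variable {N : ℕ} {V : Finset (List ℕ)} {W : List ℕ → ℝ} {ε : ℝ}

/-- Bundled working hypotheses extracted from `TreeHyp`. -/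
structure TCtx (N : ℕ) (V : Finset (List ℕ)) (W : List ℕ → ℝ) (ε : ℝ) : Prop where
  hN : 2 ≤ N
  root : [] ∈ V
  pref : ∀ v ∈ V, ∀ u : List ℕ, u <+: v → u ∈ V
  digits : ∀ v ∈ V, ∀ i ∈ v, i < N
  wroot : W [] = 1
  wpos : ∀ v ∈ V, 0 < W v
  wdecay : ∀ v ∈ V, v ≠ [] → W v ≤ ε * W v.dropLast
  epos : 0 < ε
  esmall : ε ≤ 1/4

namespace TCtx

variable (h : TCtx N V W ε)
include h

lemma take_mem {v : List ℕ} (hv : v ∈ V) (m : ℕ) : v.take m ∈ V :=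
  h.pref v hv _ (List.take_prefix m v)

lemma decay_take : ∀ n : ℕ, ∀ v ∈ V, ∀ m : ℕ, m + n = v.length →
    W v ≤ ε^n * W (v.take m) := by
  intro n
  induction n with
  | zero =>
    intro v hv m hm
    simp only [Nat.add_zero] at hm
    rw [hm, List.take_length, pow_zero, one_mul]
  | succ n ih =>
    intro v hv m hm
    have hne : v ≠ [] := by
      intro hcon; rw [hcon] at hm; simp at hm
    have h1 : W v ≤ ε * W v.dropLast := h.wdecay v hv hne
    have hdmem : v.dropLast ∈ V := h.pref v hv _ (List.dropLast_prefix v)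
    have hlen : v.dropLast.length = v.length - 1 := List.length_dropLast
    have h2 : W v.dropLast ≤ ε^n * W (v.dropLast.take m) := by
      apply ih v.dropLast hdmem m
      omega
    have h3 : v.dropLast.take m = v.take m := by
      rw [List.dropLast_eq_take, List.take_take]
      congr 1
      omega
    rw [h3] at h2
    calc W v ≤ ε * W v.dropLast := h1
      _ ≤ ε * (ε^n * W (v.take m)) := by
          apply mul_le_mul_of_nonneg_left h2 (le_of_lt h.epos)
      _ = ε^(n+1) * W (v.take m) := by ring

lemma W_le_take {v : List ℕ} (hv : v ∈ V) {m : ℕ} (hm : m ≤ v.length) :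
    W v ≤ W (v.take m) := by
  have := h.decay_take (v.length - m) v hv m (by omega)
  have hp : ε^(v.length - m) ≤ 1 :=
    pow_le_one₀ (le_of_lt h.epos) (by linarith [h.esmall])
  have hw : 0 < W (v.take m) := h.wpos _ (h.take_mem hv m)
  nlinarith

lemma W_le_eps_take {v : List ℕ} (hv : v ∈ V) {m : ℕ} (hm : m < v.length) :
    W v ≤ ε * W (v.take m) := by
  have := h.decay_take (v.length - m) v hv m (by omega)
  have hp : ε^(v.length - m) ≤ ε := by
    calc ε^(v.length - m) ≤ ε^1 :=
      pow_le_pow_of_le_one (le_of_lt h.epos) (by linarith [h.esmall]) (by omega)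
    _ = ε := pow_one ε
  have hw : 0 < W (v.take m) := h.wpos _ (h.take_mem hv m)
  nlinarith

lemma W_le_one {v : List ℕ} (hv : v ∈ V) : W v ≤ 1 := by
  have := h.W_le_take hv (Nat.zero_le v.length)
  simpa [h.wroot] using this

lemma W_prefix_le {u v : List ℕ} (hv : v ∈ V) (huv : u <+: v) : W v ≤ W u := by
  have hu : u = v.take u.length := List.prefix_iff_eq_take.mp huv
  rw [hu]; exact h.W_le_take hv huv.length_le

end TCtx

/-- Splitting of `Psi` along a prefix. -/
lemma Psi_split (N : ℕ) (W : List ℕ → ℝ) (v : List ℕ) {m : ℕ} (hm : m ≤ v.length) :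
    Psi N W v = Psi N W (v.take m) +
      ∑ i ∈ Finset.Ico m v.length, W (v.take i) * (v.getD i 0 : ℝ) / ((N:ℝ) - 1) := by
  unfold Psi
  have hlen : (v.take m).length = m := by
    rw [List.length_take]; omega
  rw [hlen]
  have hterm : ∀ i ∈ Finset.range m,
      W ((v.take m).take i) * ((v.take m).getD i 0 : ℝ) / ((N:ℝ)-1)
        = W (v.take i) * (v.getD i 0 : ℝ) / ((N:ℝ)-1) := by
    intro i hi
    rw [Finset.mem_range] at hi
    rw [List.take_take, min_eq_left hi.le]
    congr 2
    simp [List.getD_eq_getElem?_getD, List.getElem?_take, hi]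
  rw [Finset.sum_congr rfl hterm]
  rw [Finset.range_eq_Ico, Finset.range_eq_Ico]
  exact (Finset.sum_Ico_consecutive (fun i => W (v.take i) * (v.getD i 0 : ℝ) / ((N:ℝ)-1)) (Nat.zero_le m) hm).symm

end S15aux

section S15aux2

variable {N : ℕ} {V : Finset (List ℕ)} {W : List ℕ → ℝ} {ε : ℝ}

lemma tail_nonneg (h : TCtx N V W ε) {v : List ℕ} (hv : v ∈ V) (m : ℕ) :
    0 ≤ ∑ i ∈ Finset.Ico m v.length, W (v.take i) * (v.getD i 0 : ℝ) / ((N:ℝ) - 1) := by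
  apply Finset.sum_nonneg
  intro i _
  have h1 : 0 < W (v.take i) := h.wpos _ (h.take_mem hv i)
  have h2 : (0:ℝ) ≤ (v.getD i 0 : ℝ) := Nat.cast_nonneg _
  have h3 : (0:ℝ) < (N:ℝ) - 1 := by
    have : (2:ℝ) ≤ (N:ℝ) := by exact_mod_cast h.hN
    linarith
  positivity

lemma tail_le (h : TCtx N V W ε) {v : List ℕ} (hv : v ∈ V) {m : ℕ} (hm : m ≤ v.length) :
    ∑ i ∈ Finset.Ico m v.length, W (v.take i) * (v.getD i 0 : ℝ) / ((N:ℝ) - 1)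
      ≤ (4/3) * W (v.take m) := by
  have hN1 : (0:ℝ) < (N:ℝ) - 1 := by
    have : (2:ℝ) ≤ (N:ℝ) := by exact_mod_cast h.hN
    linarith
  have hterm : ∀ i ∈ Finset.Ico m v.length,
      W (v.take i) * (v.getD i 0 : ℝ) / ((N:ℝ) - 1) ≤ ε^(i-m) * W (v.take m) := by
    intro i hi
    rw [Finset.mem_Ico] at hi
    have hdig : v.getD i 0 < N := by
      have : v.getD i 0 ∈ v := by
        have : v.getD i 0 = v[i]'(hi.2) := List.getD_eq_getElem v 0 hi.2
        rw [this]; exact List.getElem_mem _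
      exact h.digits v hv _ this
    have hdig' : (v.getD i 0 : ℝ) ≤ (N:ℝ) - 1 := by
      have h5 : (v.getD i 0 : ℝ) + 1 ≤ (N:ℝ) := by exact_mod_cast hdig
      linarith
    have hWp : 0 < W (v.take i) := h.wpos _ (h.take_mem hv i)
    have h1 : W (v.take i) * (v.getD i 0 : ℝ) / ((N:ℝ) - 1) ≤ W (v.take i) := by
      rw [div_le_iff₀ hN1]
      nlinarith
    have h2 : W (v.take i) ≤ ε^(i-m) * W (v.take m) := by
      have hvi : v.take i ∈ V := h.take_mem hv i
      have := h.decay_take (i - m) (v.take i) hvi m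
        (by rw [List.length_take]; omega)
      rwa [List.take_take, min_eq_left hi.1] at this
    linarith
  calc ∑ i ∈ Finset.Ico m v.length, W (v.take i) * (v.getD i 0 : ℝ) / ((N:ℝ) - 1)
      ≤ ∑ i ∈ Finset.Ico m v.length, ε^(i-m) * W (v.take m) :=
        Finset.sum_le_sum hterm
    _ = (∑ i ∈ Finset.Ico m v.length, ε^(i-m)) * W (v.take m) := by
        rw [Finset.sum_mul]
    _ ≤ (4/3) * W (v.take m) := by
        apply mul_le_mul_of_nonneg_right _ (le_of_lt (h.wpos _ (h.take_mem hv m)))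
        have he : ∑ i ∈ Finset.Ico m v.length, ε^(i-m)
            = ∑ j ∈ Finset.range (v.length - m), ε^j := by
          rw [Finset.sum_Ico_eq_sum_range]
          apply Finset.sum_congr rfl
          intro j _
          congr 1
          omega
        rw [he]
        have hgs : ∑ j ∈ Finset.range (v.length - m), ε^j ≤ 1/(1-ε) := by
          rw [geom_sum_eq (by linarith [h.esmall])]
          rw [show (ε^(v.length - m) - 1)/(ε-1) = (1 - ε^(v.length - m))/(1-ε) by
            rw [← neg_div_neg_eq]; ring_nf]
          rw [div_le_div_iff₀ (by linarith [h.esmall]) (by linarith [h.esmall])]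
          nlinarith [pow_nonneg (le_of_lt h.epos) (v.length - m),
            mul_nonneg (pow_nonneg (le_of_lt h.epos) (v.length - m))
              (by linarith [h.esmall] : (0:ℝ) ≤ 1 - ε)]
        have : 1/(1-ε) ≤ 4/3 := by
          rw [div_le_div_iff₀ (by linarith [h.esmall]) (by norm_num)]
          linarith [h.epos, h.esmall]
        linarith

/-- For a prefix `u` of `v ∈ V`: `0 ≤ Ψv − Ψu ≤ (4/3)·W u`. -/
lemma Psi_sub_prefix (h : TCtx N V W ε) {u v : List ℕ} (hv : v ∈ V) (huv : u <+: v) :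
    0 ≤ Psi N W v - Psi N W u ∧ Psi N W v - Psi N W u ≤ (4/3) * W u := by
  have hu : u = v.take u.length := List.prefix_iff_eq_take.mp huv
  have hm : u.length ≤ v.length := huv.length_le
  have hsplit := Psi_split N W v hm
  rw [← hu] at hsplit
  constructor
  · have := tail_nonneg h hv u.length
    linarith [hsplit, tail_nonneg h hv u.length]
  · have h2 := tail_le h hv hm
    rw [← hu] at h2
    linarith

lemma Psi_nonneg (h : TCtx N V W ε) {v : List ℕ} (hv : v ∈ V) : 0 ≤ Psi N W v := by
  have := Psi_sub_prefix h hv (List.nil_prefix)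
  have hP : Psi N W ([]:List ℕ) = 0 := by simp [Psi]
  linarith [this.1]

lemma Psi_le (h : TCtx N V W ε) {v : List ℕ} (hv : v ∈ V) : Psi N W v ≤ 4/3 := by
  have := Psi_sub_prefix h hv (List.nil_prefix)
  have hP : Psi N W ([]:List ℕ) = 0 := by simp [Psi]
  rw [hP] at this
  have := this.2
  rw [h.wroot] at this
  linarith

lemma Psi_take_succ (N : ℕ) (W : List ℕ → ℝ) (v : List ℕ) {m : ℕ} (hm : m < v.length) :
    Psi N W (v.take (m+1)) = Psi N W (v.take m) + W (v.take m) * (v.getD m 0 : ℝ) / ((N:ℝ)-1) := by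
  have h1 := Psi_split N W v (le_of_lt hm)
  have h2 := Psi_split N W v (Nat.succ_le_of_lt hm)
  have h3 : ∑ i ∈ Finset.Ico m v.length, W (v.take i) * (v.getD i 0 : ℝ) / ((N:ℝ)-1)
      = W (v.take m) * (v.getD m 0 : ℝ) / ((N:ℝ)-1)
        + ∑ i ∈ Finset.Ico (m+1) v.length, W (v.take i) * (v.getD i 0 : ℝ) / ((N:ℝ)-1) :=
    Finset.sum_eq_sum_Ico_succ_bot hm _
  linarith

end S15aux2

section S15aux3

variable {N : ℕ} {V : Finset (List ℕ)} {W : List ℕ → ℝ} {ε : ℝ}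

/-- If neither of two lists is a prefix of the other, they fork at some index. -/
lemma exists_fork : ∀ (a b : List ℕ), ¬ a <+: b → ¬ b <+: a →
    ∃ m, m < a.length ∧ m < b.length ∧ a.take m = b.take m ∧ a.getD m 0 ≠ b.getD m 0 := by
  intro a
  induction a with
  | nil => intro b hab _; exact absurd (List.nil_prefix) hab
  | cons x a' ih =>
    intro b hab hba
    cases b with
    | nil => exact absurd (List.nil_prefix) hba
    | cons y b' =>
      by_cases hxy : x = y
      · subst hxy
        have hab' : ¬ a' <+: b' := fun hc => hab (List.cons_prefix_cons.mpr ⟨rfl, hc⟩)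
        have hba' : ¬ b' <+: a' := fun hc => hba (List.cons_prefix_cons.mpr ⟨rfl, hc⟩)
        obtain ⟨m, hm1, hm2, hm3, hm4⟩ := ih b' hab' hba'
        exact ⟨m+1, by simpa using hm1, by simpa using hm2, by simp [hm3], by simpa using hm4⟩
      · exact ⟨0, by simp, by simp, by simp, by simpa using hxy⟩

lemma leaf_eq_of_prefix (h : TCtx N V W ε) {u v : List ℕ} (hu : IsLeaf V u) (hv : v ∈ V)
    (huv : u <+: v) : u = v := by
  by_contra hne
  have hlen : u.length < v.length :=
    lt_of_le_of_ne huv.length_le (fun h1 => hne (huv.eq_of_length_le h1.ge))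
  have htk : v.take (u.length + 1) = u ++ [v[u.length]'hlen] := by
    rw [List.take_succ]
    rw [← List.prefix_iff_eq_take.mp huv]
    simp [List.getElem?_eq_getElem hlen]
  have hmem : v.take (u.length + 1) ∈ V := h.take_mem hv _
  rw [htk] at hmem
  exact hu.2 _ hmem

/-- Key separation estimate for forking strings. -/
lemma sep_fork (h : TCtx N V W ε) (hEN : ε ≤ 1/(8*N)) {a b : List ℕ} (ha : a ∈ V) (hb : b ∈ V)
    {m : ℕ} (hma : m < a.length) (hmb : m < b.length) (htake : a.take m = b.take m)
    (hd : a.getD m 0 ≠ b.getD m 0) :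
    W (a.take m) / (2*((N:ℝ)-1)) ≤ |Psi N W a - Psi N W b| := by
  have key : ∀ a b : List ℕ, a ∈ V → b ∈ V → ∀ m, m < a.length → m < b.length →
      a.take m = b.take m → b.getD m 0 < a.getD m 0 →
      W (a.take m) / (2*((N:ℝ)-1)) ≤ Psi N W a - Psi N W b := by
    clear hma hmb htake hd ha hb
    intro a b ha hb m hma hmb htake hlt
    have hN1 : (1:ℝ) ≤ (N:ℝ) - 1 := by
      have : (2:ℝ) ≤ (N:ℝ) := by exact_mod_cast h.hN
      linarith
    have hNpos : (0:ℝ) < (N:ℝ) - 1 := by linarith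
    have hW : 0 < W (a.take m) := h.wpos _ (h.take_mem ha m)
    have hsa := Psi_split N W a (Nat.succ_le_of_lt hma)
    have hsb := Psi_split N W b (Nat.succ_le_of_lt hmb)
    have hta := tail_nonneg h ha (m+1)
    have htb := tail_le h hb (Nat.succ_le_of_lt hmb)
    have hpa := Psi_take_succ N W a hma
    have hpb := Psi_take_succ N W b hmb
    simp only [Nat.succ_eq_add_one] at hsa hsb hta htb hpa hpb
    have hwbm : W (b.take m) = W (a.take m) := by rw [← htake]
    have hPsieq : Psi N W (b.take m) = Psi N W (a.take m) := by rw [← htake]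
    rw [hwbm, hPsieq] at hpb
    have hwb : W (b.take (m+1)) ≤ ε * W (a.take m) := by
      have hbm : b.take (m+1) ∈ V := h.take_mem hb _
      have h6 := h.W_le_eps_take hbm (m := m) (by rw [List.length_take]; omega)
      rw [List.take_take, min_eq_left (by omega : m ≤ m+1), hwbm] at h6
      exact h6
    have hdig : (b.getD m 0 : ℝ) + 1 ≤ (a.getD m 0 : ℝ) := by exact_mod_cast hlt
    have heps : ε ≤ 1/(8*(N:ℝ)) := by
      calc ε ≤ 1/(8*N) := hEN
        _ = 1/(8*(N:ℝ)) := by norm_num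
    -- step 1: lower bound via the fork term minus the tail of b
    have hcomb : W (a.take m) * ((a.getD m 0 : ℝ) - (b.getD m 0 : ℝ)) / ((N:ℝ)-1)
        = W (a.take m) * (a.getD m 0 : ℝ) / ((N:ℝ)-1)
          - W (a.take m) * (b.getD m 0 : ℝ) / ((N:ℝ)-1) := by ring
    have htb' : (4/3) * W (b.take (m+1)) ≤ (4/3) * (ε * W (a.take m)) := by linarith
    have h1 : Psi N W a - Psi N W b ≥
        W (a.take m) * ((a.getD m 0 : ℝ) - (b.getD m 0 : ℝ)) / ((N:ℝ)-1)
          - (4/3) * (ε * W (a.take m)) := by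
      linarith [hsa, hsb, hpa, hpb, hta, htb, htb', hcomb]
    have h2 : W (a.take m) / ((N:ℝ)-1)
        ≤ W (a.take m) * ((a.getD m 0 : ℝ) - (b.getD m 0 : ℝ)) / ((N:ℝ)-1) := by
      rw [div_le_div_iff₀ hNpos hNpos]
      nlinarith [mul_pos hW hNpos,
        mul_nonneg (mul_nonneg (by linarith : (0:ℝ) ≤ (a.getD m 0 : ℝ) - (b.getD m 0 : ℝ) - 1) hW.le)
          (by linarith : (0:ℝ) ≤ (N:ℝ)-1)]
    have h3 : (4/3) * (ε * W (a.take m)) ≤ W (a.take m) / (2*((N:ℝ)-1)) := by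
      rw [le_div_iff₀ (by linarith : (0:ℝ) < 2*((N:ℝ)-1))]
      have hNpos' : (0:ℝ) < 8*(N:ℝ) := by linarith
      have he8 : ε * (8*(N:ℝ)) ≤ 1 := by
        rw [← le_div_iff₀ hNpos']
        exact heps
      nlinarith [mul_le_mul_of_nonneg_left he8 hW.le,
        mul_nonneg h.epos.le hW.le,
        mul_nonneg (mul_nonneg h.epos.le hW.le) (by linarith : (0:ℝ) ≤ (N:ℝ)-1)]
    have h4 : W (a.take m) / (2*((N:ℝ)-1)) + W (a.take m) / (2*((N:ℝ)-1))
        = W (a.take m) / ((N:ℝ)-1) := by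
      field_simp
      ring
    linarith
  rcases lt_or_gt_of_ne hd with hlt | hgt
  · have h5 := key b a hb ha m hmb hma htake.symm hlt
    rw [← htake] at h5
    exact le_trans h5 (by rw [abs_sub_comm]; exact le_abs_self _)
  · exact le_trans (key a b ha hb m hma hmb htake hgt) (le_abs_self _)

end S15aux3

section S15aux4

lemma pt_app0 (a b : ℝ) : pt a b 0 = a := by simp [pt]
lemma pt_app1 (a b : ℝ) : pt a b 1 = b := by simp [pt]

lemma pt_ext {x y : Pt} (h0 : x 0 = y 0) (h1 : x 1 = y 1) : x = y := by
  ext i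
  fin_cases i
  · exact h0
  · exact h1

lemma dist_two (x y : Pt) : dist x y = Real.sqrt ((x 0 - y 0)^2 + (x 1 - y 1)^2) := by
  rw [EuclideanSpace.dist_eq]
  simp [Fin.sum_univ_two, Real.dist_eq, sq_abs]

lemma abs_coord_le (x y : Pt) (i : Fin 2) : |x i - y i| ≤ dist x y := by
  rw [dist_two]
  fin_cases i
  · show |x 0 - y 0| ≤ _
    rw [← Real.sqrt_sq_eq_abs]
    exact Real.sqrt_le_sqrt (by nlinarith [sq_nonneg (x 1 - y 1)])
  · show |x 1 - y 1| ≤ _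
    rw [← Real.sqrt_sq_eq_abs]
    exact Real.sqrt_le_sqrt (by nlinarith [sq_nonneg (x 0 - y 0)])

lemma dist_le_of_sq (x y : Pt) {c : ℝ} (hc : 0 ≤ c)
    (h : (x 0 - y 0)^2 + (x 1 - y 1)^2 ≤ c^2) : dist x y ≤ c := by
  rw [dist_two]
  calc Real.sqrt ((x 0 - y 0)^2 + (x 1 - y 1)^2) ≤ Real.sqrt (c^2) := Real.sqrt_le_sqrt h
    _ = c := by rw [Real.sqrt_sq hc]

lemma dist_le_of_coords (x y : Pt) {a b : ℝ} (h0 : |x 0 - y 0| ≤ a) (h1 : |x 1 - y 1| ≤ b)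
    (ha : 0 ≤ a) (hb : 0 ≤ b) {c : ℝ} (hc : 0 ≤ c) (habc : a^2 + b^2 ≤ c^2) :
    dist x y ≤ c := by
  apply dist_le_of_sq x y hc
  have h0' : (x 0 - y 0)^2 ≤ a^2 := sq_le_sq' (by linarith [abs_le.mp h0 |>.1]) (abs_le.mp h0 |>.2)
  have h1' : (x 1 - y 1)^2 ≤ b^2 := sq_le_sq' (by linarith [abs_le.mp h1 |>.1]) (abs_le.mp h1 |>.2)
  linarith

namespace DSquare

lemma side_pos (Q : DSquare) : 0 < Q.side := by
  unfold side; positivity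

lemma side_le_eight (Q : DSquare) : Q.side ≤ 8 := by
  unfold side
  rw [div_le_iff₀ (by positivity)]
  have : (1:ℝ) ≤ 2^Q.k := one_le_pow₀ (by norm_num)
  linarith

lemma corner_mem (Q : DSquare) : pt Q.x0 Q.y0 ∈ Q.set := by
  constructor
  · rw [pt_app0]; exact ⟨le_refl _, by linarith [Q.side_pos]⟩
  · rw [pt_app1]; exact ⟨le_refl _, by linarith [Q.side_pos]⟩

lemma set_subset_dil (Q : DSquare) {lam : ℝ} (hlam : 1 ≤ lam) : Q.set ⊆ Q.dil lam := by
  rintro x ⟨⟨h1, h2⟩, ⟨h3, h4⟩⟩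
  have hs := Q.side_pos
  constructor
  · rw [abs_le]; constructor <;> [nlinarith; nlinarith]
  · rw [abs_le]; constructor <;> [nlinarith; nlinarith]

lemma dil_mono (Q : DSquare) {lam lam' : ℝ} (h : lam ≤ lam') : Q.dil lam ⊆ Q.dil lam' := by
  rintro x ⟨h1, h2⟩
  have hs := Q.side_pos
  constructor
  · apply le_trans h1; nlinarith
  · apply le_trans h2; nlinarith

lemma x0_bounds (Q : DSquare) : -3 ≤ Q.x0 ∧ Q.x0 + Q.side ≤ 5 := by
  have hi : (Q.i : ℝ) + 1 ≤ 2^Q.k := by exact_mod_cast Nat.succ_le_of_lt Q.hi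
  have h2 : (0:ℝ) < 2^Q.k := by positivity
  have hside : Q.side = 8 / 2^Q.k := rfl
  constructor
  · unfold x0
    have : 0 ≤ (Q.i : ℝ) * Q.side := mul_nonneg (Nat.cast_nonneg _) Q.side_pos.le
    linarith
  · unfold x0
    rw [hside]
    have h5 : ((Q.i : ℝ) + 1) * (8 / 2^Q.k) ≤ (2^Q.k : ℝ) * (8 / 2^Q.k) :=
      mul_le_mul_of_nonneg_right hi (by positivity)
    have h6 : (2^Q.k : ℝ) * (8 / 2^Q.k) = 8 := by field_simp
    nlinarith [h5]

lemma y0_bounds (Q : DSquare) : -3 ≤ Q.y0 ∧ Q.y0 + Q.side ≤ 5 := by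
  have hj : (Q.j : ℝ) + 1 ≤ 2^Q.k := by exact_mod_cast Nat.succ_le_of_lt Q.hj
  have h2 : (0:ℝ) < 2^Q.k := by positivity
  have hside : Q.side = 8 / 2^Q.k := rfl
  constructor
  · unfold y0
    have : 0 ≤ (Q.j : ℝ) * Q.side := mul_nonneg (Nat.cast_nonneg _) Q.side_pos.le
    linarith
  · unfold y0
    rw [hside]
    have h5 : ((Q.j : ℝ) + 1) * (8 / 2^Q.k) ≤ (2^Q.k : ℝ) * (8 / 2^Q.k) :=
      mul_le_mul_of_nonneg_right hj (by positivity)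
    have h6 : (2^Q.k : ℝ) * (8 / 2^Q.k) = 8 := by field_simp
    nlinarith [h5]

lemma set_subset_Q0 (Q : DSquare) : Q.set ⊆ Q0set := by
  rintro x ⟨⟨h1, h2⟩, ⟨h3, h4⟩⟩
  obtain ⟨hx1, hx2⟩ := Q.x0_bounds
  obtain ⟨hy1, hy2⟩ := Q.y0_bounds
  exact ⟨⟨by linarith, by linarith⟩, ⟨by linarith, by linarith⟩⟩

lemma anc_side (Q : DSquare) (k' : ℕ) (h : k' ≤ Q.k) : (Q.anc k' h).side = 8 / 2^k' := rfl

end DSquare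

end S15aux4

section S15aux5

variable {N : ℕ} {V : Finset (List ℕ)} {W : List ℕ → ℝ} {ε : ℝ}

lemma exists_leaf (h : TCtx N V W ε) : ∃ v, IsLeaf V v := by
  obtain ⟨v, hv, hmax⟩ := V.exists_max_image List.length ⟨[], h.root⟩
  refine ⟨v, hv, fun a ha => ?_⟩
  have := hmax _ ha
  simp at this

lemma leaf_ne_nil (hd : DepthAtLeastOne V) {u : List ℕ} (hu : IsLeaf V u) : u ≠ [] := by
  intro hcon
  obtain ⟨a, ha⟩ := hd
  subst hcon
  exact hu.2 a (by simpa using ha)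

lemma DeltaSet_finite : {w : ℝ | ∃ v, IsLeaf V v ∧ w = W v}.Finite := by
  apply Set.Finite.subset (V.finite_toSet.image W)
  rintro w ⟨v, hv, rfl⟩
  exact ⟨v, hv.1, rfl⟩

lemma Delta_le_leaf (h : TCtx N V W ε) {u : List ℕ} (hu : IsLeaf V u) : Delta V W ≤ W u :=
  csInf_le DeltaSet_finite.bddBelow ⟨u, hu, rfl⟩

lemma Delta_pos (h : TCtx N V W ε) : 0 < Delta V W := by
  obtain ⟨u, hu⟩ := exists_leaf h
  have hne : {w : ℝ | ∃ v, IsLeaf V v ∧ w = W v}.Nonempty := ⟨W u, u, hu, rfl⟩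
  obtain ⟨v, hv, hveq⟩ := hne.csInf_mem DeltaSet_finite
  rw [show Delta V W = W v from hveq]
  exact h.wpos v hv.1

lemma Delta_le_eps (h : TCtx N V W ε) (hd : DepthAtLeastOne V) : Delta V W ≤ ε := by
  obtain ⟨u, hu⟩ := exists_leaf h
  have hne := leaf_ne_nil hd hu
  calc Delta V W ≤ W u := Delta_le_leaf h hu
    _ ≤ ε * W u.dropLast := h.wdecay u hu.1 hne
    _ ≤ ε * 1 := by
        apply mul_le_mul_of_nonneg_left _ h.epos.le
        exact h.W_le_one (h.pref u hu.1 _ (List.dropLast_prefix u))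
    _ = ε := mul_one ε

lemma cluster_leaf (h : TCtx N V W ε) {u : List ℕ} (hu : IsLeaf V u) :
    Cluster N V W u = {pt (Psi N W u) (W u)} := by
  ext x
  constructor
  · rintro ⟨u', hu', huu', rfl⟩
    rw [leaf_eq_of_prefix h hu hu'.1 huu']
    rfl
  · rintro rfl
    exact ⟨u, hu, List.prefix_refl u, rfl⟩

lemma cluster_diam (h : TCtx N V W ε) {v : List ℕ} (hv : v ∈ V) {x z : Pt}
    (hx : x ∈ Cluster N V W v) (hz : z ∈ Cluster N V W v) :
    dist x z ≤ (5/3) * W v := by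
  obtain ⟨a, ha, hva, rfl⟩ := hx
  obtain ⟨b, hb, hvb, rfl⟩ := hz
  have hWv : 0 < W v := h.wpos v hv
  have hpa := Psi_sub_prefix h ha.1 hva
  have hpb := Psi_sub_prefix h hb.1 hvb
  have hWa : W a ≤ W v := h.W_prefix_le ha.1 hva
  have hWb : W b ≤ W v := h.W_prefix_le hb.1 hvb
  have hWa0 : 0 < W a := h.wpos a ha.1
  have hWb0 : 0 < W b := h.wpos b hb.1
  apply dist_le_of_coords _ _ (a := (4/3) * W v) (b := W v)
  · rw [pt_app0, pt_app0, abs_le]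
    constructor <;> linarith [hpa.1, hpa.2, hpb.1, hpb.2]
  · rw [pt_app1, pt_app1, abs_le]
    constructor <;> linarith
  · positivity
  · exact hWv.le
  · positivity
  · nlinarith [sq_nonneg (W v)]

/-- Separation between distinct `E₂` points. -/
lemma E2_sep (h : TCtx N V W ε) (hEN : ε ≤ 1/(8*N)) {a b : List ℕ}
    (ha : IsLeaf V a) (hb : IsLeaf V b) (hne : a ≠ b) :
    ∃ m, m < a.length ∧ m < b.length ∧ a.take m = b.take m ∧
      W (a.take m) / (2*((N:ℝ)-1)) ≤ dist (pt (Psi N W a) (W a)) (pt (Psi N W b) (W b)) := by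
  have hab : ¬ a <+: b := fun hp => hne (leaf_eq_of_prefix h ha hb.1 hp)
  have hba : ¬ b <+: a := fun hp => hne (leaf_eq_of_prefix h hb ha.1 hp).symm
  obtain ⟨m, hm1, hm2, hm3, hm4⟩ := exists_fork a b hab hba
  refine ⟨m, hm1, hm2, hm3, ?_⟩
  calc W (a.take m) / (2*((N:ℝ)-1)) ≤ |Psi N W a - Psi N W b| :=
        sep_fork h hEN ha.1 hb.1 hm1 hm2 hm3 hm4
    _ = |pt (Psi N W a) (W a) 0 - pt (Psi N W b) (W b) 0| := by rw [pt_app0, pt_app0]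
    _ ≤ _ := abs_coord_le _ _ 0

end S15aux5

section S15aux6

variable {N : ℕ} {V : Finset (List ℕ)} {W : List ℕ → ℝ} {ε : ℝ}

/-- Minimal separation of the set `E`. -/
lemma E_sep (h : TCtx N V W ε) (hEN : ε ≤ 1/(8*N)) :
    ∀ x ∈ Eset N V W, ∀ z ∈ Eset N V W, x ≠ z → Delta V W ≤ dist x z := by
  have hΔpos := Delta_pos h
  have hNR : (2:ℝ) ≤ (N:ℝ) := by exact_mod_cast h.hN
  -- E1 vs E2 : vertical separation
  have h12 : ∀ x ∈ E1set (Delta V W), ∀ z ∈ E2set N V W, Delta V W ≤ dist x z := by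
    rintro x ⟨_, _, hx1⟩ z ⟨b, hb, rfl⟩
    have hWb : Delta V W ≤ W b := Delta_le_leaf h hb
    calc Delta V W ≤ |x 1 - pt (Psi N W b) (W b) 1| := by
          rw [pt_app1, hx1, abs_sub_comm]
          rw [abs_of_nonneg (by linarith : (0:ℝ) ≤ W b - 0)]
          linarith
      _ ≤ _ := abs_coord_le _ _ 1
  rintro x (hx | hx) z (hz | hz) hxz
  · -- both E1
    obtain ⟨⟨n, hn⟩, hnI, hx1⟩ := hx
    obtain ⟨⟨m, hm⟩, hmI, hz1⟩ := hz
    have hnm : n ≠ m := by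
      intro hcon
      exact hxz (pt_ext (x := x) (y := z) (by rw [hn, hm, hcon]) (by rw [hx1, hz1]))
    have h1 : (1:ℝ) ≤ |(n:ℝ) - (m:ℝ)| := by
      have h2 : (1:ℤ) ≤ |n - m| := by rcases abs_pos.mpr (sub_ne_zero.mpr hnm) with h; omega
      have h3 : ((1:ℤ):ℝ) ≤ ((|n - m|:ℤ):ℝ) := by exact_mod_cast h2
      rwa [Int.cast_abs, Int.cast_sub, Int.cast_one] at h3
    calc Delta V W = 1 * Delta V W := (one_mul _).symm
      _ ≤ |(n:ℝ) - (m:ℝ)| * Delta V W := by nlinarith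
      _ = |x 0 - z 0| := by rw [hn, hm, ← sub_mul, abs_mul, abs_of_pos hΔpos]
      _ ≤ dist x z := abs_coord_le _ _ 0
  · exact h12 x hx z hz
  · rw [dist_comm]; exact h12 z hz x hx
  · -- both E2
    obtain ⟨a, ha, rfl⟩ := hx
    obtain ⟨b, hb, rfl⟩ := hz
    have hab : a ≠ b := by rintro rfl; exact hxz rfl
    obtain ⟨m, hma, hmb, htk, hsep⟩ := E2_sep h hEN ha hb hab
    have hWw : 0 < W (a.take m) := h.wpos _ (h.take_mem ha.1 m)
    have hWa : W a ≤ ε * W (a.take m) := h.W_le_eps_take ha.1 hma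
    have hΔa : Delta V W ≤ W a := Delta_le_leaf h ha
    have hNpos : (0:ℝ) < (N:ℝ) := by linarith
    have h8N : Delta V W * (8*(N:ℝ)) ≤ W (a.take m) := by
      have hε8 : ε * (8*(N:ℝ)) ≤ 1 := by
        rw [← le_div_iff₀ (by positivity)]; exact_mod_cast hEN
      nlinarith
    have : Delta V W ≤ W (a.take m) / (2*((N:ℝ)-1)) := by
      rw [le_div_iff₀ (by linarith : (0:ℝ) < 2*((N:ℝ)-1))]
      nlinarith
    linarith
end S15aux6

set_option maxHeartbeats 4000000 in
/-- well-definedness of the cluster assignment `Q ↦ C_Q`, together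
with parts of Lemma 8 of the paper. -/
theorem statement15 :
    ∃ κ₁ K₁ : ℝ, 10 < κ₁ ∧ 1 < K₁ ∧
      ∀ κ : ℝ, κ₁ ≤ κ →
        ∃ k₀ : ℝ, 0 < k₀ ∧
          ∀ (N : ℕ) (V : Finset (List ℕ)) (W : List ℕ → ℝ) (ε : ℝ) (y : List ℕ → Pt),
            TreeHyp k₀ N V W ε → DepthAtLeastOne V →
            (∀ v ∈ V, y v ∈ Cluster N V W v) →
              (∀ v ∈ V, Cluster N V W v ⊆ closedBall (y v) (K₁ * W v)) ∧
              Q0set ⊆ closedBall (y []) (κ * K₁ * W []) ∧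
              ∃ cq : DSquare → List ℕ,
                ∀ Q : DSquare, InWhitney (Eset N V W) Q →
                  (cq Q ∈ V ∧
                    Q.set ⊆ closedBall (y (cq Q)) (κ * K₁ * W (cq Q)) ∧
                    ∀ v ∈ V, Q.set ⊆ closedBall (y v) (κ * K₁ * W v) →
                      v.length ≤ (cq Q).length) ∧
                  (Delta V W / 20 ≤ Q.side ∧ Q.side ≤ 2 * K₁ * κ * W (cq Q)) ∧
                  (∀ x : Pt, Q.dil 1.1 ∩ E2set N V W = {x} →
                    Cluster N V W (cq Q) = {x}) ∧
                  ((Q.dil 1.1 ∩ frontier Q0set).Nonempty → cq Q = []) := by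
  refine ⟨11, 2, by norm_num, by norm_num, fun κ hκ => ⟨1/(200*κ), by positivity, ?_⟩⟩
  intro N V W ε y hTH hDepth hy
  obtain ⟨hN2, ⟨hroot, hpref, hdig, _hbranch⟩, hε0, hεk, ⟨hW1, hWpos, hWdec⟩⟩ := hTH
  have hκ11 : (11:ℝ) ≤ κ := hκ
  have hκ0 : (0:ℝ) < κ := by linarith
  have hNR : (2:ℝ) ≤ (N:ℝ) := by exact_mod_cast hN2
  have hN0 : (0:ℝ) < (N:ℝ) := by linarith
  have hεbig : ε ≤ 1/(200*κ*(N:ℝ)) := by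
    calc ε ≤ (1/(200*κ))/(N:ℝ) := hεk
      _ = 1/(200*κ*(N:ℝ)) := by rw [div_div]
  have hεN : ε ≤ 1/(8*(N:ℝ)) := by
    have : (8:ℝ)*(N:ℝ) ≤ 200*κ*(N:ℝ) := by nlinarith
    calc ε ≤ 1/(200*κ*(N:ℝ)) := hεbig
      _ ≤ 1/(8*(N:ℝ)) := by
          apply one_div_le_one_div_of_le (by positivity) this
  have hεq : ε ≤ 1/4 := by
    have h16 : (16:ℝ) ≤ 8*(N:ℝ) := by linarith
    have : (1:ℝ)/(8*(N:ℝ)) ≤ 1/16 := one_div_le_one_div_of_le (by norm_num) h16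
    linarith
  have h : TCtx N V W ε := ⟨hN2, hroot, hpref, hdig, hW1, hWpos, hWdec, hε0, hεq⟩
  have hεNn : ε ≤ 1/(8*N) := by exact_mod_cast hεN
  -- (1) each cluster is contained in the ball of radius K₁ W around its center
  have part1 : ∀ v ∈ V, Cluster N V W v ⊆ closedBall (y v) (2 * W v) := by
    intro v hv x hx
    rw [mem_closedBall]
    have := cluster_diam h hv hx (hy v hv)
    have hWv := hWpos v hv
    linarith
  -- (2) Q⁰ is contained in the root ball
  have part2 : Q0set ⊆ closedBall (y []) (κ * 2 * W []) := by
    obtain ⟨u, hu, _, hyu⟩ := hy [] hroot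
    intro x ⟨⟨hx01, hx02⟩, ⟨hx11, hx12⟩⟩
    rw [mem_closedBall, hyu]
    have hΨ1 : 0 ≤ Psi N W u := Psi_nonneg h hu.1
    have hΨ2 : Psi N W u ≤ 4/3 := Psi_le h hu.1
    have hWu1 : 0 < W u := hWpos u hu.1
    have hWu2 : W u ≤ 1 := h.W_le_one hu.1
    have h8 : dist x (pt (Psi N W u) (W u)) ≤ 8 := by
      apply dist_le_of_coords _ _ (a := 5) (b := 5) <;>
        [skip; skip; norm_num; norm_num; norm_num; norm_num]
      · rw [pt_app0, abs_le]; constructor <;> linarith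
      · rw [pt_app1, abs_le]; constructor <;> linarith
    rw [hW1]
    linarith
  refine ⟨part1, part2, ?_⟩
  -- define the cluster assignment by maximal depth
  have hcand : ∀ Q : DSquare, ∃ v, (v ∈ V ∧ Q.set ⊆ closedBall (y v) (κ * 2 * W v)) ∧
      ∀ v' ∈ V, Q.set ⊆ closedBall (y v') (κ * 2 * W v') → v'.length ≤ v.length := by
    intro Q
    obtain ⟨v, hvmem, hvmax⟩ := Finset.exists_max_image
      (V.filter fun v => Q.set ⊆ closedBall (y v) (κ * 2 * W v)) List.length
      ⟨[], by
        rw [Finset.mem_filter]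
        refine ⟨hroot, fun x hx => ?_⟩
        have := part2 (Q.set_subset_Q0 hx)
        simpa using this⟩
    rw [Finset.mem_filter] at hvmem
    refine ⟨v, ⟨hvmem.1, hvmem.2⟩, fun v' hv' hsub => ?_⟩
    exact hvmax v' (Finset.mem_filter.mpr ⟨hv', hsub⟩)
  choose cq hcq1 hcqmax using hcand
  refine ⟨cq, fun Q hQW => ?_⟩
  obtain ⟨hcqV, hcqsub⟩ := hcq1 Q
  have hWcq : 0 < W (cq Q) := hWpos _ hcqV
  -- generic upper bound on the sidelength
  have hub : Q.side ≤ 2 * 2 * κ * W (cq Q) := by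
    by_contra hcon
    push_neg at hcon
    set r := κ * 2 * W (cq Q) with hr
    have hr0 : 0 < r := by positivity
    have h2r : 2 * r = 2 * 2 * κ * W (cq Q) := by rw [hr]; ring
    set t := (2 * r + Q.side) / 2 with ht
    have ht1 : 2 * r < t := by rw [ht]; linarith
    have ht2 : t < Q.side := by rw [ht]; linarith
    have ht0 : 0 ≤ t := by rw [ht]; linarith
    have hp1 : pt Q.x0 Q.y0 ∈ Q.set := Q.corner_mem
    have hp2 : pt (Q.x0 + t) Q.y0 ∈ Q.set := by
      constructor
      · rw [pt_app0]; exact ⟨by linarith, by linarith⟩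
      · rw [pt_app1]; exact ⟨le_refl _, by linarith [Q.side_pos]⟩
    have hdist : dist (pt Q.x0 Q.y0) (pt (Q.x0 + t) Q.y0) = t := by
      rw [dist_two, pt_app0, pt_app0, pt_app1, pt_app1]
      rw [show Q.x0 - (Q.x0 + t) = -t by ring, show Q.y0 - Q.y0 = (0:ℝ) by ring]
      rw [show (-t)^2 + (0:ℝ)^2 = t^2 by ring, Real.sqrt_sq ht0]
    have hb1 : dist (pt Q.x0 Q.y0) (y (cq Q)) ≤ r := mem_closedBall.mp (hcqsub hp1)
    have hb2 : dist (pt (Q.x0 + t) Q.y0) (y (cq Q)) ≤ r := mem_closedBall.mp (hcqsub hp2)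
    have := dist_triangle (pt Q.x0 Q.y0) (y (cq Q)) (pt (Q.x0 + t) Q.y0)
    rw [dist_comm (y (cq Q)) (pt (Q.x0 + t) Q.y0)] at this
    rw [hdist] at this
    linarith
  -- lower bound on the sidelength
  have hlb : Delta V W / 20 ≤ Q.side := by
    have hΔpos := Delta_pos h
    have hΔε : Delta V W ≤ ε := Delta_le_eps h hDepth
    rcases Nat.eq_zero_or_pos Q.k with hk | hk
    · have hside : Q.side = 8 := by
        unfold DSquare.side; rw [hk]; norm_num
      rw [hside]
      linarith
    · have hns := hQW.2 (Q.k - 1) (by omega)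
      rw [Set.not_subsingleton_iff] at hns
      obtain ⟨x, hx, z, hz, hxz⟩ := hns
      obtain ⟨hxd, hxE⟩ := hx
      obtain ⟨hzd, hzE⟩ := hz
      have hancside : (Q.anc (Q.k - 1) (by omega)).side = 2 * Q.side := by
        rw [Q.anc_side]
        unfold DSquare.side
        have hpow : (2:ℝ)^Q.k = 2^(Q.k-1) * 2 := by
          rw [← pow_succ]; congr 1; omega
        rw [hpow]
        have : ((2:ℝ)^(Q.k-1)) ≠ 0 := by positivity
        field_simp
      obtain ⟨hxd0, hxd1⟩ := hxd
      obtain ⟨hzd0, hzd1⟩ := hzd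
      rw [hancside] at hxd0 hxd1 hzd0 hzd1
      have hs0 := Q.side_pos
      have hdxz : dist x z ≤ 9 * Q.side := by
        rw [abs_le] at hxd0 hxd1 hzd0 hzd1
        apply dist_le_of_coords _ _ (a := 6 * Q.side) (b := 6 * Q.side)
        · exact abs_le.mpr ⟨by linarith [hxd0.1, hxd0.2, hzd0.1, hzd0.2],
            by linarith [hxd0.1, hxd0.2, hzd0.1, hzd0.2]⟩
        · exact abs_le.mpr ⟨by linarith [hxd1.1, hxd1.2, hzd1.1, hzd1.2],
            by linarith [hxd1.1, hxd1.2, hzd1.1, hzd1.2]⟩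
        · positivity
        · positivity
        · positivity
        · nlinarith
      have hEsep := E_sep h hεNn x hxE z hzE hxz
      linarith
  refine ⟨⟨hcqV, hcqsub, hcqmax Q⟩, ⟨hlb, hub⟩, ?_, ?_⟩
  · -- (c) type II squares
    intro x hxeq
    have hxmem : x ∈ Q.dil 1.1 ∩ E2set N V W := by rw [hxeq]; exact Set.mem_singleton x
    obtain ⟨hxdil, hxE2⟩ := hxmem
    obtain ⟨u, hu, hxu⟩ := hxE2
    have hWu : 0 < W u := hWpos u hu.1
    have hΔpos := Delta_pos h
    have hΔWu : Delta V W ≤ W u := Delta_le_leaf h hu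
    have hΨu1 : 0 ≤ Psi N W u := Psi_nonneg h hu.1
    have hΨu2 : Psi N W u ≤ 4/3 := Psi_le h hu.1
    have hs0 := Q.side_pos
    obtain ⟨hxdil0, hxdil1⟩ := hxdil
    have hx0eq : x 0 = Psi N W u := by rw [hxu, pt_app0]
    have hx1eq : x 1 = W u := by rw [hxu, pt_app1]
    rw [hx0eq] at hxdil0
    rw [hx1eq] at hxdil1
    -- the nearby grid point on E₁
    obtain ⟨n, hn0, hfl1, hfl2⟩ : ∃ n : ℤ, 0 ≤ n ∧ (n:ℝ) * Delta V W ≤ Psi N W u ∧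
        Psi N W u < (n:ℝ) * Delta V W + Delta V W := by
      refine ⟨⌊Psi N W u / Delta V W⌋,
        Int.floor_nonneg.mpr (div_nonneg hΨu1 hΔpos.le), ?_, ?_⟩
      · have h1 := Int.floor_le (Psi N W u / Delta V W)
        have h2 := mul_le_mul_of_nonneg_right h1 hΔpos.le
        rwa [div_mul_cancel₀ _ (ne_of_gt hΔpos)] at h2
      · have h1 := Int.lt_floor_add_one (Psi N W u / Delta V W)
        have h2 := mul_lt_mul_of_pos_right h1 hΔpos
        rw [div_mul_cancel₀ _ (ne_of_gt hΔpos)] at h2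
        linarith [h2]
    have hpE1 : pt ((n:ℝ) * Delta V W) 0 ∈ E1set (Delta V W) := by
      refine ⟨⟨n, by rw [pt_app0]⟩, ?_, by rw [pt_app1]⟩
      rw [pt_app0]
      constructor
      · have : (0:ℝ) ≤ (n:ℝ) := by exact_mod_cast hn0
        positivity
      · linarith
    have hpne : pt ((n:ℝ) * Delta V W) 0 ≠ x := by
      intro hcon
      have := congrArg (fun f => f 1) hcon
      simp only [pt_app1] at this
      rw [hx1eq] at this
      linarith
    have hpnot : pt ((n:ℝ) * Delta V W) 0 ∉ Q.dil 3 := by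
      intro hmem
      exact hpne (hQW.1 ⟨hmem, Or.inl hpE1⟩
        ⟨Q.dil_mono (show (1.1:ℝ) ≤ 3 by norm_num) ⟨by rw [hx0eq]; exact hxdil0, by rw [hx1eq]; exact hxdil1⟩,
          Or.inr ⟨u, hu, hxu⟩⟩)
    -- sidelength is controlled by W u
    have hsu : 19 * Q.side ≤ 20 * W u := by
      have hnot : ¬ (|(n:ℝ) * Delta V W - (Q.x0 + Q.side/2)| ≤ 3 * Q.side / 2 ∧
          |(0:ℝ) - (Q.y0 + Q.side/2)| ≤ 3 * Q.side / 2) := by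
        intro hcon
        refine hpnot ⟨?_, ?_⟩
        · rw [pt_app0]; exact hcon.1
        · rw [pt_app1]; exact hcon.2
      have hd0 := abs_le.mp hxdil0
      have hd1 := abs_le.mp hxdil1
      have h110 : (1.1:ℝ) * Q.side / 2 = 11/20 * Q.side := by norm_num; ring
      rw [h110] at hd0 hd1
      rcases not_and_or.mp hnot with hc | hc
      · push_neg at hc
        rcases lt_abs.mp hc with h1 | h1
        · linarith [hd0.1, hd0.2, hfl1, hfl2]
        · linarith [hd0.1, hd0.2, hfl1, hfl2, hΔWu]
      · push_neg at hc
        rcases lt_abs.mp hc with h1 | h1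
        · linarith [hd1.1, hd1.2, hWu]
        · linarith [hd1.1, hd1.2, hWu]
    -- every point of Q is close to x
    have hqx : ∀ q ∈ Q.set, dist q x ≤ (8/5) * Q.side := by
      intro q hq
      obtain ⟨hq0, hq1⟩ := Q.set_subset_dil (by norm_num : (1:ℝ) ≤ 1.1) hq
      apply dist_le_of_coords _ _ (a := (11/10) * Q.side) (b := (11/10) * Q.side)
      · rcases abs_le.mp hq0 with ⟨h2, h3⟩
        rcases abs_le.mp hxdil0 with ⟨h4, h5⟩
        rw [abs_le, hx0eq]
        have h110 : (1.1:ℝ) * Q.side / 2 = 11/20 * Q.side := by norm_num; ring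
        rw [h110] at *
        constructor <;> linarith
      · rcases abs_le.mp hq1 with ⟨h2, h3⟩
        rcases abs_le.mp hxdil1 with ⟨h4, h5⟩
        rw [abs_le, hx1eq]
        have h110 : (1.1:ℝ) * Q.side / 2 = 11/20 * Q.side := by norm_num; ring
        rw [h110] at *
        constructor <;> linarith
      · positivity
      · positivity
      · positivity
      · nlinarith [sq_nonneg Q.side]
    -- u is a candidate vertex for Q
    have hyu : y u = x := by
      have h1 := hy u hu.1
      rw [cluster_leaf h hu] at h1
      rw [hxu]
      exact h1
    have hucand : Q.set ⊆ closedBall (y u) (κ * 2 * W u) := by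
      intro q hq
      rw [mem_closedBall, hyu]
      have h1 := hqx q hq
      have h2 : (8/5) * Q.side ≤ (8/5) * ((20/19) * W u) := by
        apply mul_le_mul_of_nonneg_left _ (by norm_num)
        linarith
      nlinarith
    have hlenu : u.length ≤ (cq Q).length := hcqmax Q u hu.1 hucand
    -- the chosen vertex must be u itself
    have hequ : cq Q = u := by
      by_contra hne
      obtain ⟨u'', hu'', hvu'', hyv⟩ := hy (cq Q) hcqV
      have hvnu : ¬ (cq Q) <+: u := fun hp => hne (hp.eq_of_length_le hlenu)
      have hune : u ≠ u'' := by
        intro hcon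
        exact hvnu (by rw [hcon]; exact hvu'')
      obtain ⟨m, hmu, hmu'', htk, hsep⟩ := E2_sep h hεNn hu hu'' hune
      have hWw : 0 < W (u.take m) := hWpos _ (h.take_mem hu.1 m)
      have hv1 : cq Q = u''.take (cq Q).length := List.prefix_iff_eq_take.mp hvu''
      have hmv : m < (cq Q).length := by
        by_contra hcon
        push_neg at hcon
        apply hvnu
        have h2 : cq Q = u.take (cq Q).length := by
          calc cq Q = u''.take (cq Q).length := hv1
            _ = (u''.take m).take (cq Q).length := by rw [List.take_take, min_eq_left hcon]
            _ = (u.take m).take (cq Q).length := by rw [htk]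
            _ = u.take (cq Q).length := by rw [List.take_take, min_eq_left hcon]
        rw [h2]
        exact List.take_prefix _ _
      have hWu' : W u ≤ ε * W (u.take m) := h.W_le_eps_take hu.1 hmu
      have hWv : W (cq Q) ≤ ε * W (u.take m) := by
        have hvtk : (cq Q).take m = u.take m := by
          calc (cq Q).take m = (u''.take (cq Q).length).take m := by rw [← hv1]
            _ = u''.take m := by rw [List.take_take, min_eq_left hmv.le]
            _ = u.take m := htk.symm
        have h2 := h.W_le_eps_take hcqV hmv
        rwa [hvtk] at h2
      -- quantitative step
      have hstep : ∀ z : ℝ, 0 ≤ z → z ≤ ε * W (u.take m) →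
          100 * κ * z ≤ W (u.take m) / (2*((N:ℝ)-1)) := by
        intro z hz0 hz
        have he : ε * (200*κ*(N:ℝ)) ≤ 1 := by
          rw [← le_div_iff₀ (by positivity)]
          exact hεbig
        have h2 : z * (200*κ*(N:ℝ)) ≤ W (u.take m) := by
          calc z * (200*κ*(N:ℝ)) ≤ (ε * W (u.take m)) * (200*κ*(N:ℝ)) :=
                mul_le_mul_of_nonneg_right hz (by positivity)
            _ ≤ W (u.take m) := by nlinarith
        rw [le_div_iff₀ (by linarith : (0:ℝ) < 2*((N:ℝ)-1))]
        nlinarith [mul_nonneg (mul_nonneg (by positivity : (0:ℝ) ≤ 100*κ) hz0) (by linarith : (0:ℝ) ≤ 1)]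
      have hA := hstep (W u) hWu.le hWu'
      have hB := hstep (W (cq Q)) hWcq.le hWv
      have hS0 : 0 < W (u.take m) / (2*((N:ℝ)-1)) := div_pos hWw (by linarith)
      -- upper bound on the distance
      have hT : dist x (y (cq Q)) ≤ (17/10) * W u + κ * 2 * W (cq Q) := by
        have h1 := hqx _ Q.corner_mem
        have h2 : dist (pt Q.x0 Q.y0) (y (cq Q)) ≤ κ * 2 * W (cq Q) :=
          mem_closedBall.mp (hcqsub Q.corner_mem)
        have h3 := dist_triangle x (pt Q.x0 Q.y0) (y (cq Q))
        rw [dist_comm x (pt Q.x0 Q.y0)] at h3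
        have h4 : (8/5) * Q.side ≤ (17/10) * W u := by linarith
        linarith
      have hSd : W (u.take m) / (2*((N:ℝ)-1)) ≤ dist x (y (cq Q)) := by
        rw [hxu, hyv]
        exact hsep
      nlinarith [hS0, hA, hB, hT, hSd, hκ11, hWu, hWcq]
    rw [hequ, cluster_leaf h hu, hxu]
  · -- (d) boundary squares
    intro hfr
    by_contra hne
    obtain ⟨a, ha, hva, hyv⟩ := hy (cq Q) hcqV
    have hΨa1 : 0 ≤ Psi N W a := Psi_nonneg h ha.1
    have hΨa2 : Psi N W a ≤ 4/3 := Psi_le h ha.1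
    have hWa1 : 0 < W a := hWpos a ha.1
    have hWa2 : W a ≤ 1 := h.W_le_one ha.1
    have hs0 := Q.side_pos
    -- the weight of a nonroot vertex is at most ε
    have hWveps : W (cq Q) ≤ ε := by
      have hlen : 0 < (cq Q).length := List.length_pos_iff.mpr hne
      have h1 := h.W_le_eps_take hcqV (m := 0) hlen
      rw [List.take_zero, hW1, mul_one] at h1
      exact h1
    have hεsmall : ε ≤ 1/(400*κ) := by
      have h1 : (400:ℝ)*κ ≤ 200*κ*(N:ℝ) := by nlinarith
      calc ε ≤ 1/(200*κ*(N:ℝ)) := hεbig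
        _ ≤ 1/(400*κ) := one_div_le_one_div_of_le (by positivity) h1
    have hrad : κ * 2 * W (cq Q) ≤ 1/200 := by
      have h1 : κ * 2 * W (cq Q) ≤ κ * 2 * ε := by nlinarith
      have h2 : κ * 2 * ε ≤ κ * 2 * (1/(400*κ)) := by nlinarith
      have h3 : κ * 2 * (1/(400*κ)) = 1/200 := by field_simp; ring
      linarith
    have hside : Q.side ≤ 1/100 := by
      have := hub
      linarith
    -- corner is close to y (cq Q)
    have hcornerd : dist (pt Q.x0 Q.y0) (y (cq Q)) ≤ 1/200 :=
      le_trans (mem_closedBall.mp (hcqsub Q.corner_mem)) hrad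
    rw [hyv] at hcornerd
    have hc0 : |Q.x0 - Psi N W a| ≤ 1/200 := by
      have h1 := abs_coord_le (pt Q.x0 Q.y0) (y (cq Q)) 0
      rw [pt_app0, hyv, pt_app0] at h1
      linarith
    have hc1 : |Q.y0 - W a| ≤ 1/200 := by
      have h1 := abs_coord_le (pt Q.x0 Q.y0) (y (cq Q)) 1
      rw [pt_app1, hyv, pt_app1] at h1
      linarith
    -- a point on the frontier of Q⁰ would lie deep inside Q⁰
    obtain ⟨z, hzdil, hzfr⟩ := hfr
    obtain ⟨hz0, hz1⟩ := hzdil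
    have h110 : (1.1:ℝ) * Q.side / 2 = 11/20 * Q.side := by norm_num; ring
    rw [h110] at hz0 hz1
    rcases abs_le.mp hz0 with ⟨hz01, hz02⟩
    rcases abs_le.mp hz1 with ⟨hz11, hz12⟩
    rcases abs_le.mp hc0 with ⟨hc01, hc02⟩
    rcases abs_le.mp hc1 with ⟨hc11, hc12⟩
    have hzint : z ∈ interior Q0set := by
      apply mem_interior.mpr
      refine ⟨ball z 1, ?_, isOpen_ball, mem_ball_self one_pos⟩
      intro w hw
      have hw0 := abs_coord_le w z 0
      have hw1 := abs_coord_le w z 1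
      have hwd : dist w z < 1 := mem_ball.mp hw
      rcases abs_le.mp (le_of_lt (lt_of_le_of_lt hw0 hwd)) with ⟨hwa, hwb⟩
      rcases abs_le.mp (le_of_lt (lt_of_le_of_lt hw1 hwd)) with ⟨hwc, hwd'⟩
      constructor
      · constructor <;> [linarith; linarith]
      · constructor <;> [linarith; linarith]
    rw [frontier, Set.mem_diff] at hzfr
    exact hzfr.2 hzint
end

section
/- There is a constant κ₁ > 10 such that for every κ ≥ κ₁ there exists k₀ = k₀(κ) > 0 with the following property. In the setting of the Whitney decomposition 𝒲 and the cluster assignment Q ↦ C_Q with ε ≤ k₀/N: if Q, Q' ∈ 𝒲 with Q ↔ Q' and C_Q ≠ C_{Q'}, then either C_Q = π(C_{Q'}) or C_{Q'} = π(C_Q). -/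
open MeasureTheory Set Metric
open scoped Classical

noncomputable section AuxLemmas

namespace Statement16Aux

lemma pt_eval0 (a b : ℝ) : pt a b 0 = a := rfl
lemma pt_eval1 (a b : ℝ) : pt a b 1 = b := rfl

lemma dist_coord_le (x y : Pt) (i : Fin 2) : |x i - y i| ≤ dist x y := by
  rw [EuclideanSpace.dist_eq]
  have h : |x i - y i| = Real.sqrt (dist (x i) (y i) ^ 2) := by
    rw [Real.sqrt_sq dist_nonneg, Real.dist_eq]
  rw [h]
  exact Real.sqrt_le_sqrt (Finset.single_le_sum (f := fun j => dist (x j) (y j) ^ 2)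
    (fun j _ => sq_nonneg _) (Finset.mem_univ i))

lemma dist_le_coords (x y : Pt) : dist x y ≤ |x 0 - y 0| + |x 1 - y 1| := by
  rw [EuclideanSpace.dist_eq, Fin.sum_univ_two]
  have h : Real.sqrt ((|x 0 - y 0| + |x 1 - y 1|) ^ 2) = |x 0 - y 0| + |x 1 - y 1| :=
    Real.sqrt_sq (by positivity)
  rw [← h]
  apply Real.sqrt_le_sqrt
  rw [Real.dist_eq, Real.dist_eq]
  nlinarith [abs_nonneg (x 0 - y 0), abs_nonneg (x 1 - y 1), sq_abs (x 0 - y 0), sq_abs (x 1 - y 1)]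

/-! ### List lemmas -/

lemma prefix_dropLast_of_lt {v u : List ℕ} (h : v <+: u) (hl : v.length < u.length) :
    v <+: u.dropLast := by
  have hv : v = u.take v.length := List.prefix_iff_eq_take.1 h
  rw [List.dropLast_eq_take, List.prefix_iff_eq_take, List.take_take]
  have h1 : min v.length (u.length - 1) = v.length := by omega
  rw [h1]; exact hv

lemma eq_dropLast_of_prefix {v u : List ℕ} (h : v <+: u) (hl : v.length + 1 = u.length) :
    v = u.dropLast := by
  have hv : v = u.take v.length := List.prefix_iff_eq_take.1 h
  rw [List.dropLast_eq_take, hv]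
  congr 1
  omega

lemma length_lt_of_prefix_ne {v u : List ℕ} (h : v <+: u) (hne : v ≠ u) :
    v.length < u.length := by
  rcases lt_or_eq_of_le h.length_le with h' | h'
  · exact h'
  · exact absurd (List.IsPrefix.eq_of_length h h') hne

lemma exists_fork : ∀ (v v' : List ℕ), ¬ v <+: v' → ¬ v' <+: v →
    ∃ w a b, a ≠ b ∧ (w ++ [a]) <+: v ∧ (w ++ [b]) <+: v'
  | [], l, h, _ => absurd (List.nil_prefix (l := l)) h
  | _ :: _, [], _, h => absurd List.nil_prefix h
  | x :: v, x' :: v', h, h' => by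
    by_cases hx : x = x'
    · subst hx
      obtain ⟨w, a, b, hab, ha, hb⟩ := exists_fork v v'
        (fun hp => h (by simpa [List.cons_prefix_cons] using hp))
        (fun hp => h' (by simpa [List.cons_prefix_cons] using hp))
      exact ⟨x :: w, a, b, hab, by simpa [List.cons_prefix_cons] using ha,
        by simpa [List.cons_prefix_cons] using hb⟩
    · exact ⟨[], x, x', hx, ⟨v, rfl⟩, ⟨v', rfl⟩⟩

lemma take_eq_of_prefix {v u : List ℕ} (h : v <+: u) {i : ℕ} (hi : i ≤ v.length) :
    u.take i = v.take i := by
  obtain ⟨t, rfl⟩ := h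
  exact List.take_append_of_le_length hi

lemma getD_eq_of_prefix {v u : List ℕ} (h : v <+: u) {i : ℕ} (hi : i < v.length) :
    u.getD i 0 = v.getD i 0 := by
  obtain ⟨t, rfl⟩ := h
  exact List.getD_append _ _ _ _ hi

/-! ### Weight lemmas -/

section Weights
variable {N : ℕ} {V : Finset (List ℕ)} {W : List ℕ → ℝ} {ε : ℝ}
variable (hpc : ∀ v ∈ V, ∀ u : List ℕ, u <+: v → u ∈ V)
variable (hpos : ∀ v ∈ V, 0 < W v)
variable (hdec : ∀ v ∈ V, v ≠ [] → W v ≤ ε * W v.dropLast)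
variable (hε0 : 0 < ε) (hε2 : ε ≤ 1/2)

set_option linter.unusedSectionVars false

include hpc hpos hdec hε0 hε2 in
lemma W_mono : ∀ u ∈ V, ∀ v, v <+: u → W u ≤ W v := by
  intro u
  induction u using List.reverseRecOn with
  | nil => intro _ v hv; rw [List.prefix_nil.1 hv]
  | append_singleton us a ih =>
    intro hu v hv
    rcases eq_or_ne v (us ++ [a]) with rfl | hne
    · exact le_refl _
    · have hlv : v.length < (us ++ [a]).length := length_lt_of_prefix_ne hv hne
      have hpre : v <+: us := by
        have := prefix_dropLast_of_lt hv hlv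
        rwa [List.dropLast_concat] at this
      have hus : us ∈ V := hpc _ hu _ (List.prefix_append _ _)
      have h1 : W (us ++ [a]) ≤ ε * W us := by
        have := hdec _ hu (by simp)
        rwa [List.dropLast_concat] at this
      have h2 : W us ≤ W v := ih hus v hpre
      have h3 : 0 < W us := hpos _ hus
      nlinarith

include hpc hpos hdec hε0 hε2 in
lemma W_decay {u v : List ℕ} (hu : u ∈ V) (h : v <+: u) (hne : v ≠ u) : W u ≤ ε * W v := by
  have hun : u ≠ [] := by rintro rfl; exact hne (List.prefix_nil.1 h)
  have hlv : v.length < u.length := length_lt_of_prefix_ne h hne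
  have h1 : W u ≤ ε * W u.dropLast := hdec _ hu hun
  have h2 : W u.dropLast ≤ W v :=
    W_mono hpc hpos hdec hε0 hε2 _ (hpc _ hu _ (List.dropLast_prefix u)) v
      (prefix_dropLast_of_lt h hlv)
  nlinarith

/-! ### Psi lemmas -/

lemma Psi_split {v u : List ℕ} (h : v <+: u) :
    Psi N W u = Psi N W v +
      ∑ i ∈ Finset.Ico v.length u.length, W (u.take i) * (u.getD i 0 : ℝ) / ((N : ℝ) - 1) := by
  unfold Psi
  rw [Finset.range_eq_Ico,
    ← Finset.sum_Ico_consecutive _ (Nat.zero_le v.length) h.length_le]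
  congr 1
  · rw [← Finset.range_eq_Ico]
    apply Finset.sum_congr rfl
    intro i hi
    simp only [Finset.mem_range] at hi
    rw [take_eq_of_prefix h (le_of_lt hi), getD_eq_of_prefix h hi]

include hpc hpos hdec hε0 hε2 in
lemma sum_W_take {u : List ℕ} (hu : u ∈ V) (m : ℕ) :
    ∀ n, m ≤ n → n ≤ u.length →
      ∑ i ∈ Finset.Ico m n, W (u.take i) ≤ 2 * (W (u.take m) - W (u.take n)) := by
  intro n
  induction n with
  | zero => intro h1 _; simp [Nat.le_zero.1 h1]
  | succ n ih =>
    intro h1 h2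
    rcases eq_or_lt_of_le h1 with rfl | hlt
    · simp
    · have hmn : m ≤ n := by omega
      have hn : n ≤ u.length := by omega
      have hIH := ih hmn hn
      rw [Finset.sum_Ico_succ_top hmn]
      have htk : u.take (n+1) ∈ V := hpc _ hu _ (List.take_prefix _ _)
      have htk2 : u.take n ∈ V := hpc _ hu _ (List.take_prefix _ _)
      have hne : u.take (n+1) ≠ [] := by
        have hh : (u.take (n+1)).length = n+1 := by
          rw [List.length_take]; omega
        intro h; rw [h] at hh; simp at hh
      have hdl : (u.take (n+1)).dropLast = u.take n := by
        rw [List.dropLast_eq_take, List.take_take, List.length_take]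
        congr 1
        omega
      have hd := hdec _ htk hne
      rw [hdl] at hd
      have hp1 : 0 < W (u.take n) := hpos _ htk2
      nlinarith

variable (helts : ∀ v ∈ V, ∀ i ∈ v, i < N) (hN : 2 ≤ N)

include hpc hpos hdec hε0 hε2 helts hN in
lemma Psi_diff_bounds {u v : List ℕ} (hu : u ∈ V) (h : v <+: u) :
    0 ≤ Psi N W u - Psi N W v ∧ Psi N W u - Psi N W v ≤ 2 * W v := by
  have hsplit := Psi_split (W := W) (N := N) h
  have hN1 : (1:ℝ) ≤ (N:ℝ) - 1 := by
    have : (2:ℝ) ≤ (N:ℝ) := by exact_mod_cast hN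
    linarith
  have hterm : ∀ i ∈ Finset.Ico v.length u.length,
      0 ≤ W (u.take i) * (u.getD i 0 : ℝ) / ((N : ℝ) - 1) ∧
      W (u.take i) * (u.getD i 0 : ℝ) / ((N : ℝ) - 1) ≤ W (u.take i) := by
    intro i hi
    simp only [Finset.mem_Ico] at hi
    have htk : u.take i ∈ V := hpc _ hu _ (List.take_prefix _ _)
    have hWt : 0 < W (u.take i) := hpos _ htk
    have hget : u.getD i 0 < N := by
      have hmem : u.getD i 0 ∈ u := by
        rw [List.getD_eq_getElem u 0 hi.2]
        exact List.getElem_mem _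
      exact helts _ hu _ hmem
    have hgetR : (u.getD i 0 : ℝ) ≤ (N:ℝ) - 1 := by
      have h1 : (u.getD i 0 : ℕ) + 1 ≤ N := hget
      have h2 := (Nat.cast_le (α := ℝ)).2 h1
      push_cast at h2
      linarith
    constructor
    · positivity
    · rw [div_le_iff₀ (by linarith)]
      nlinarith [Nat.cast_nonneg (α := ℝ) (u.getD i 0)]
  constructor
  · rw [hsplit]
    have : 0 ≤ ∑ i ∈ Finset.Ico v.length u.length,
        W (u.take i) * (u.getD i 0 : ℝ) / ((N : ℝ) - 1) :=
      Finset.sum_nonneg (fun i hi => (hterm i hi).1)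
    linarith
  · rw [hsplit]
    have h1 : ∑ i ∈ Finset.Ico v.length u.length,
        W (u.take i) * (u.getD i 0 : ℝ) / ((N : ℝ) - 1) ≤
        ∑ i ∈ Finset.Ico v.length u.length, W (u.take i) :=
      Finset.sum_le_sum (fun i hi => (hterm i hi).2)
    have h2 := sum_W_take hpc hpos hdec hε0 hε2 hu v.length u.length h.length_le (le_refl _)
    have h3 : u.take v.length = v := (List.prefix_iff_eq_take.1 h).symm
    rw [h3] at h2
    have h4 : 0 < W (u.take u.length) := hpos _ (hpc _ hu _ (List.take_prefix _ _))
    linarith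

lemma Psi_append {w : List ℕ} {a : ℕ} :
    Psi N W (w ++ [a]) = Psi N W w + W w * (a : ℝ) / ((N : ℝ) - 1) := by
  rw [Psi_split (v := w) (u := w ++ [a]) (List.prefix_append _ _)]
  have hl : (w ++ [a]).length = w.length + 1 := by simp
  rw [hl]
  rw [Finset.sum_Ico_succ_top (le_refl _), Finset.Ico_self, Finset.sum_empty, zero_add]
  have h1 : (w ++ [a]).take w.length = w := List.take_left
  have h2 : (w ++ [a]).getD w.length 0 = a := by
    rw [List.getD_eq_getElem _ 0 (by simp)]
    simp
  rw [h1, h2]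

end Weights

/-! ### Cluster lemmas -/

lemma cluster_mono {N : ℕ} {V : Finset (List ℕ)} {W : List ℕ → ℝ} {v u : List ℕ}
    (h : v <+: u) : Cluster N V W u ⊆ Cluster N V W v := by
  rintro x ⟨t, hl, hpre, hx⟩
  exact ⟨t, hl, h.trans hpre, hx⟩

/-! ### Square lemmas -/

def cen (Q : DSquare) : Pt := pt (Q.x0 + Q.side / 2) (Q.y0 + Q.side / 2)

lemma side_pos (Q : DSquare) : 0 < Q.side := by
  unfold DSquare.side; positivity

lemma cen_mem (Q : DSquare) : cen Q ∈ Q.set := by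
  have hs := side_pos Q
  constructor
  · show Q.x0 + Q.side / 2 ∈ Set.Ico Q.x0 (Q.x0 + Q.side)
    constructor <;> [linarith; linarith]
  · show Q.y0 + Q.side / 2 ∈ Set.Ico Q.y0 (Q.y0 + Q.side)
    constructor <;> [linarith; linarith]

lemma corner_mem (Q : DSquare) : pt Q.x0 Q.y0 ∈ Q.set := by
  have hs := side_pos Q
  constructor
  · show Q.x0 ∈ Set.Ico Q.x0 (Q.x0 + Q.side)
    constructor <;> [linarith; linarith]
  · show Q.y0 ∈ Set.Ico Q.y0 (Q.y0 + Q.side)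
    constructor <;> [linarith; linarith]

lemma dist_cen_le {Q : DSquare} {q : Pt} (h : q ∈ Q.set) : dist q (cen Q) ≤ Q.side := by
  obtain ⟨h0, h1⟩ := h
  simp only [Set.mem_Ico] at h0 h1
  have e0 : cen Q 0 = Q.x0 + Q.side / 2 := rfl
  have e1 : cen Q 1 = Q.y0 + Q.side / 2 := rfl
  have := dist_le_coords q (cen Q)
  rw [e0, e1] at this
  have a0 : |q 0 - (Q.x0 + Q.side / 2)| ≤ Q.side / 2 := by
    rw [abs_le]; constructor <;> [linarith [h0.1, h0.2]; linarith [h0.1, h0.2]]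
  have a1 : |q 1 - (Q.y0 + Q.side / 2)| ≤ Q.side / 2 := by
    rw [abs_le]; constructor <;> [linarith [h1.1, h1.2]; linarith [h1.1, h1.2]]
  linarith

lemma side_le_of_subset_ball {Q : DSquare} {c : Pt} {r : ℝ}
    (h : Q.set ⊆ Metric.closedBall c r) : Q.side ≤ 4 * r := by
  have h1 := Metric.mem_closedBall.1 (h (cen_mem Q))
  have h2 := Metric.mem_closedBall.1 (h (corner_mem Q))
  have h3 : Q.side / 2 ≤ dist (cen Q) (pt Q.x0 Q.y0) := by
    have := dist_coord_le (cen Q) (pt Q.x0 Q.y0) 0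
    have e0 : cen Q 0 = Q.x0 + Q.side / 2 := rfl
    have e1 : pt Q.x0 Q.y0 0 = Q.x0 := rfl
    rw [e0, e1] at this
    have : |Q.side / 2| ≤ dist (cen Q) (pt Q.x0 Q.y0) := by
      convert this using 2; ring
    calc Q.side / 2 ≤ |Q.side / 2| := le_abs_self _
      _ ≤ _ := this
  have h4 := dist_triangle (cen Q) c (pt Q.x0 Q.y0)
  rw [dist_comm c (pt Q.x0 Q.y0)] at h4
  linarith

lemma touch_cen_dist {Q Q' : DSquare} (ht : Touch Q Q') :
    dist (cen Q) (cen Q') ≤ 1.1 * (Q.side + Q'.side) := by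
  obtain ⟨x, hx1, hx2⟩ := ht
  obtain ⟨a0, a1⟩ := hx1
  obtain ⟨b0, b1⟩ := hx2
  have e0 : cen Q 0 = Q.x0 + Q.side / 2 := rfl
  have e1 : cen Q 1 = Q.y0 + Q.side / 2 := rfl
  have f0 : cen Q' 0 = Q'.x0 + Q'.side / 2 := rfl
  have f1 : cen Q' 1 = Q'.y0 + Q'.side / 2 := rfl
  have hd := dist_le_coords (cen Q) (cen Q')
  rw [e0, e1, f0, f1] at hd
  rw [abs_le] at a0 a1 b0 b1
  have c0 : |Q.x0 + Q.side / 2 - (Q'.x0 + Q'.side / 2)| ≤ 0.55 * (Q.side + Q'.side) := by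
    rw [abs_le]
    constructor <;> [nlinarith [a0.1, a0.2, b0.1, b0.2]; nlinarith [a0.1, a0.2, b0.1, b0.2]]
  have c1 : |Q.y0 + Q.side / 2 - (Q'.y0 + Q'.side / 2)| ≤ 0.55 * (Q.side + Q'.side) := by
    rw [abs_le]
    constructor <;> [nlinarith [a1.1, a1.2, b1.1, b1.2]; nlinarith [a1.1, a1.2, b1.1, b1.2]]
  nlinarith [hd]

lemma anc_side (Q : DSquare) (k' : ℕ) (h : k' ≤ Q.k) :
    (Q.anc k' h).side = 2 ^ (Q.k - k') * Q.side := by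
  show (8:ℝ) / 2 ^ k' = 2 ^ (Q.k - k') * (8 / 2 ^ Q.k)
  have h2 : (2:ℝ) ^ Q.k = 2 ^ (Q.k - k') * 2 ^ k' := by
    rw [← pow_add]; congr 1; omega
  rw [h2]
  have p1 : (0:ℝ) < 2 ^ k' := by positivity
  have p2 : (0:ℝ) < 2 ^ (Q.k - k') := by positivity
  field_simp

lemma anc_x0_le (Q : DSquare) (k' : ℕ) (h : k' ≤ Q.k) : (Q.anc k' h).x0 ≤ Q.x0 := by
  unfold DSquare.x0
  rw [anc_side]
  have hle : ((Q.i / 2 ^ (Q.k - k') : ℕ) : ℝ) * 2 ^ (Q.k - k') ≤ (Q.i : ℝ) := by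
    exact_mod_cast Nat.cast_le.2 (Nat.div_mul_le_self Q.i (2 ^ (Q.k - k')))
  have hs := side_pos Q
  show -3 + ((Q.anc k' h).i : ℝ) * (2 ^ (Q.k - k') * Q.side) ≤ -3 + Q.i * Q.side
  have he : ((Q.anc k' h).i : ℝ) = ((Q.i / 2 ^ (Q.k - k') : ℕ) : ℝ) := rfl
  rw [he]
  nlinarith

lemma anc_x1_ge (Q : DSquare) (k' : ℕ) (h : k' ≤ Q.k) :
    Q.x0 + Q.side ≤ (Q.anc k' h).x0 + (Q.anc k' h).side := by
  unfold DSquare.x0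
  rw [anc_side]
  have key : (Q.i : ℝ) + 1 ≤ (((Q.i / 2 ^ (Q.k - k') : ℕ) : ℝ) + 1) * 2 ^ (Q.k - k') := by
    have hm := Nat.mod_lt Q.i (show 0 < 2 ^ (Q.k - k') by positivity)
    have hnat : Q.i + 1 ≤ (Q.i / 2 ^ (Q.k - k') + 1) * 2 ^ (Q.k - k') := by
      nlinarith [Nat.div_add_mod Q.i (2 ^ (Q.k - k')), hm]
    exact_mod_cast Nat.cast_le.2 hnat
  have hs := side_pos Q
  have he : ((Q.anc k' h).i : ℝ) = ((Q.i / 2 ^ (Q.k - k') : ℕ) : ℝ) := rfl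
  rw [he]
  nlinarith

lemma anc_y0_le (Q : DSquare) (k' : ℕ) (h : k' ≤ Q.k) : (Q.anc k' h).y0 ≤ Q.y0 := by
  unfold DSquare.y0
  rw [anc_side]
  have hle : ((Q.j / 2 ^ (Q.k - k') : ℕ) : ℝ) * 2 ^ (Q.k - k') ≤ (Q.j : ℝ) := by
    exact_mod_cast Nat.cast_le.2 (Nat.div_mul_le_self Q.j (2 ^ (Q.k - k')))
  have hs := side_pos Q
  show -3 + ((Q.anc k' h).j : ℝ) * (2 ^ (Q.k - k') * Q.side) ≤ -3 + Q.j * Q.side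
  have he : ((Q.anc k' h).j : ℝ) = ((Q.j / 2 ^ (Q.k - k') : ℕ) : ℝ) := rfl
  rw [he]
  nlinarith

lemma anc_y1_ge (Q : DSquare) (k' : ℕ) (h : k' ≤ Q.k) :
    Q.y0 + Q.side ≤ (Q.anc k' h).y0 + (Q.anc k' h).side := by
  unfold DSquare.y0
  rw [anc_side]
  have key : (Q.j : ℝ) + 1 ≤ (((Q.j / 2 ^ (Q.k - k') : ℕ) : ℝ) + 1) * 2 ^ (Q.k - k') := by
    have hm := Nat.mod_lt Q.j (show 0 < 2 ^ (Q.k - k') by positivity)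
    have hnat : Q.j + 1 ≤ (Q.j / 2 ^ (Q.k - k') + 1) * 2 ^ (Q.k - k') := by
      nlinarith [Nat.div_add_mod Q.j (2 ^ (Q.k - k')), hm]
    exact_mod_cast Nat.cast_le.2 hnat
  have hs := side_pos Q
  have he : ((Q.anc k' h).j : ℝ) = ((Q.j / 2 ^ (Q.k - k') : ℕ) : ℝ) := rfl
  rw [he]
  nlinarith

/-- Whitney squares that touch have comparable sidelengths. -/
lemma whitney_comp {E : Set Pt} {Q Q' : DSquare}
    (hQ : InWhitney E Q) (hQ' : InWhitney E Q') (ht : Touch Q Q') :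
    Q'.side ≤ 4 * Q.side := by
  by_contra hc
  push_neg at hc
  -- then Q is much smaller than Q', so Q.k ≥ Q'.k + 3
  have hp : (0:ℝ) < 2 ^ Q.k := by positivity
  have hp' : (0:ℝ) < 2 ^ Q'.k := by positivity
  have hk : Q'.k + 3 ≤ Q.k := by
    have hc' : (32:ℝ) / 2 ^ Q.k < 8 / (2:ℝ) ^ Q'.k := by
      have he : 4 * (8 / (2:ℝ) ^ Q.k) = 32 / 2 ^ Q.k := by ring
      have := hc
      unfold DSquare.side at this
      linarith [he ▸ this]
    have hc2 : (32:ℝ) * 2 ^ Q'.k < 8 * 2 ^ Q.k := (div_lt_div_iff₀ hp hp').1 hc'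
    have h1 : (2:ℝ) ^ (Q'.k + 2) < 2 ^ Q.k := by
      rw [pow_add]
      nlinarith
    have h2 : Q'.k + 2 < Q.k :=
      (pow_lt_pow_iff_right₀ (a := (2:ℝ)) one_lt_two).1 h1
    omega
  have hlt : Q'.k + 2 < Q.k := by omega
  set A := Q.anc (Q'.k + 2) hlt.le with hA
  have hAside : A.side = Q'.side / 4 := by
    show (8:ℝ) / 2 ^ (Q'.k + 2) = 8 / 2 ^ Q'.k / 4
    rw [pow_add]
    field_simp
    ring
  have hQside : Q.side ≤ Q'.side / 8 := by
    have h1 : (2:ℝ) ^ (Q'.k + 3) ≤ 2 ^ Q.k := pow_le_pow_right₀ one_le_two hk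
    have h2 : (8:ℝ) / 2 ^ Q.k ≤ 8 / 2 ^ (Q'.k + 3) :=
      div_le_div_of_nonneg_left (by norm_num) (by positivity) h1
    have h3 : (8:ℝ) / 2 ^ (Q'.k + 3) = (8 / 2 ^ Q'.k) / 8 := by
      rw [pow_add]
      have : (0:ℝ) < 2 ^ Q'.k := by positivity
      field_simp
      ring
    show (8:ℝ) / 2 ^ Q.k ≤ (8 / 2 ^ Q'.k) / 8
    rw [← h3]
    exact h2
  have hsub : A.dil 3 ⊆ Q'.dil 3 := by
    obtain ⟨x, hx1, hx2⟩ := ht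
    obtain ⟨a0, a1⟩ := hx1
    obtain ⟨b0, b1⟩ := hx2
    intro z hz
    obtain ⟨z0, z1⟩ := hz
    have hax0 := anc_x0_le Q (Q'.k + 2) hlt.le
    have hax1 := anc_x1_ge Q (Q'.k + 2) hlt.le
    have hay0 := anc_y0_le Q (Q'.k + 2) hlt.le
    have hay1 := anc_y1_ge Q (Q'.k + 2) hlt.le
    rw [abs_le] at a0 a1 b0 b1 z0 z1
    have hsQ := side_pos Q
    have hsQ' := side_pos Q'
    have hsA := side_pos A
    constructor
    · rw [abs_le]
      constructor
      · linarith [z0.1, z0.2, a0.1, a0.2, b0.1, b0.2, hax0, hax1, hAside, hQside, hsQ, hsQ']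
      · linarith [z0.1, z0.2, a0.1, a0.2, b0.1, b0.2, hax0, hax1, hAside, hQside, hsQ, hsQ']
    · rw [abs_le]
      constructor
      · linarith [z1.1, z1.2, a1.1, a1.2, b1.1, b1.2, hay0, hay1, hAside, hQside, hsQ, hsQ']
      · linarith [z1.1, z1.2, a1.1, a1.2, b1.1, b1.2, hay0, hay1, hAside, hQside, hsQ, hsQ']
  have hss : (A.dil 3 ∩ E).Subsingleton :=
    hQ'.1.anti (Set.inter_subset_inter_left E hsub)
  exact hQ.2 (Q'.k + 2) hlt hss

end Statement16Aux

end AuxLemmas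

set_option maxHeartbeats 2000000 in
/-- part (C) of Lemma 8 of the paper. -/
theorem statement16 :
    ∃ κ₁ K₁ : ℝ, 10 < κ₁ ∧ 1 < K₁ ∧
      ∀ κ : ℝ, κ₁ ≤ κ →
        ∃ k₀ : ℝ, 0 < k₀ ∧
          ∀ (N : ℕ) (V : Finset (List ℕ)) (W : List ℕ → ℝ) (ε : ℝ)
              (y : List ℕ → Pt) (cq : DSquare → List ℕ),
            TreeHyp k₀ N V W ε → DepthAtLeastOne V →
            (∀ v ∈ V, y v ∈ Cluster N V W v) →
            (∀ v ∈ V, Cluster N V W v ⊆ closedBall (y v) (K₁ * W v)) →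
            Q0set ⊆ closedBall (y []) (κ * K₁ * W []) →
            (∀ Q : DSquare, InWhitney (Eset N V W) Q →
              cq Q ∈ V ∧
                Q.set ⊆ closedBall (y (cq Q)) (κ * K₁ * W (cq Q)) ∧
                ∀ v ∈ V, Q.set ⊆ closedBall (y v) (κ * K₁ * W v) →
                  v.length ≤ (cq Q).length) →
            ∀ Q Q' : DSquare, InWhitney (Eset N V W) Q → InWhitney (Eset N V W) Q' →
              Touch Q Q' → cq Q ≠ cq Q' →
                cq Q = (cq Q').dropLast ∨ cq Q' = (cq Q).dropLast := by
  refine ⟨11, 2, by norm_num, by norm_num, fun κ hκ =>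
    ⟨1/(200*κ), by
      have h : (0:ℝ) < κ := by linarith
      positivity, ?_⟩⟩
  intro N V W ε y cq hTH hdepth hyC hCball hQ0 hcq Q Q' hQw hQ'w ht hne
  obtain ⟨hN, hTree, hε0, hεk, hRD⟩ := hTH
  obtain ⟨hroot, hpc, helts, _hbr⟩ := hTree
  obtain ⟨hW1, hpos, hdec⟩ := hRD
  have hκ0 : (0:ℝ) < κ := by linarith
  have hκ11 : (11:ℝ) ≤ κ := hκ
  have hNR : (2:ℝ) ≤ (N:ℝ) := by exact_mod_cast hN
  have hNpos : (0:ℝ) < (N:ℝ) := by linarith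
  have hεN : ε * N ≤ 1/(200*κ) := by
    have h := mul_le_mul_of_nonneg_right hεk (le_of_lt hNpos)
    rwa [div_mul_cancel₀ _ (ne_of_gt hNpos)] at h
  have h2ε : 2 * ε ≤ 1/(200*κ) := by nlinarith
  have h200 : (1:ℝ)/(200*κ) ≤ 1/2200 := by
    apply div_le_div_of_nonneg_left (by norm_num) (by norm_num) (by linarith)
  have hε2 : ε ≤ 1/2 := by linarith
  have hεκ : ε * κ ≤ 1/400 := by
    have h3 := mul_le_mul_of_nonneg_right h2ε hκ0.le
    have h4 : (1/(200*κ)) * κ = 1/200 := by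
      field_simp
    nlinarith
  have hWmono : ∀ u ∈ V, ∀ v, v <+: u → W u ≤ W v :=
    Statement16Aux.W_mono hpc hpos hdec hε0 hε2
  have hyd : ∀ u ∈ V, ∀ v, v <+: u → dist (y u) (y v) ≤ 2 * W v := by
    intro u hu v hpre
    have hv : v ∈ V := hpc u hu v hpre
    have h1 : y u ∈ Cluster N V W v := Statement16Aux.cluster_mono hpre (hyC u hu)
    have h2 := hCball v hv h1
    rwa [Metric.mem_closedBall] at h2
  have hSide : ∀ Qa : DSquare, InWhitney (Eset N V W) Qa → Qa.side ≤ 8 * κ * W (cq Qa) := by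
    intro Qa hwa
    obtain ⟨hv, hsub, -⟩ := hcq Qa hwa
    have h1 := Statement16Aux.side_le_of_subset_ball hsub
    linarith
  -- KEY STEP: touching Whitney squares have cluster depths within one of each other
  have key : ∀ Qa Qb : DSquare, InWhitney (Eset N V W) Qa → InWhitney (Eset N V W) Qb →
      Touch Qa Qb → (cq Qa).length ≤ (cq Qb).length + 1 := by
    intro Qa Qb hwa hwb htab
    rcases eq_or_ne (cq Qa) [] with hva | hva
    · rw [hva]; simp
    obtain ⟨hvV, hQasub, -⟩ := hcq Qa hwa
    obtain ⟨-, -, hmaxb⟩ := hcq Qb hwb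
    set v := cq Qa with hv
    set p := v.dropLast with hp
    have hpv : p <+: v := List.dropLast_prefix v
    have hlenv : 1 ≤ v.length := List.length_pos_iff.2 hva
    have hplen : p.length = v.length - 1 := by rw [hp, List.length_dropLast]
    have hpne : p ≠ v := by
      intro h; have := congrArg List.length h; omega
    have hpV : p ∈ V := hpc v hvV p hpv
    have hWp : 0 < W p := hpos p hpV
    have hWv : 0 < W v := hpos v hvV
    have hWvp : W v ≤ ε * W p := Statement16Aux.W_decay hpc hpos hdec hε0 hε2 hvV hpv hpne
    have hsa : Qa.side ≤ 8 * κ * W v := hSide Qa hwa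
    have hsb : Qb.side ≤ 4 * Qa.side := Statement16Aux.whitney_comp hwa hwb htab
    have hsapos := Statement16Aux.side_pos Qa
    have hsbpos := Statement16Aux.side_pos Qb
    have htba : Touch Qb Qa := by
      obtain ⟨x, h1x, h2x⟩ := htab; exact ⟨x, h2x, h1x⟩
    have hd2 : dist (Statement16Aux.cen Qb) (Statement16Aux.cen Qa) ≤
        1.1 * (Qb.side + Qa.side) := Statement16Aux.touch_cen_dist htba
    have hd3 : dist (Statement16Aux.cen Qa) (y v) ≤ κ * 2 * W v :=
      Metric.mem_closedBall.1 (hQasub (Statement16Aux.cen_mem Qa))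
    have hd4 : dist (y v) (y p) ≤ 2 * W p := hyd v hvV p hpv
    have hsub' : Qb.set ⊆ Metric.closedBall (y p) (κ * 2 * W p) := by
      intro q hq
      have hd1 : dist q (Statement16Aux.cen Qb) ≤ Qb.side := Statement16Aux.dist_cen_le hq
      have t1 := dist_triangle4 q (Statement16Aux.cen Qb) (Statement16Aux.cen Qa) (y v)
      have t2 := dist_triangle q (y v) (y p)
      rw [Metric.mem_closedBall]
      have hκWv : κ * W v ≤ (1/400) * W p := by
        have h1 : κ * W v ≤ κ * (ε * W p) := mul_le_mul_of_nonneg_left hWvp hκ0.le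
        have h3 : (ε * κ) * W p ≤ (1/400) * W p := mul_le_mul_of_nonneg_right hεκ hWp.le
        nlinarith
      have hfin : (22:ℝ) * W p ≤ κ * 2 * W p := by nlinarith
      linarith
    have hle := hmaxb p hpV hsub'
    omega
  -- COMPARABILITY: the two clusters are prefix-comparable
  have comp : cq Q <+: cq Q' ∨ cq Q' <+: cq Q := by
    by_contra hcmp
    push_neg at hcmp
    obtain ⟨h1, h2⟩ := hcmp
    obtain ⟨w, a, b, hab, hwa, hwb⟩ := Statement16Aux.exists_fork _ _ h1 h2
    obtain ⟨hvV, hQsub, -⟩ := hcq Q hQw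
    obtain ⟨hv'V, hQ'sub, -⟩ := hcq Q' hQ'w
    have hwaV : w ++ [a] ∈ V := hpc _ hvV _ hwa
    have hwbV : w ++ [b] ∈ V := hpc _ hv'V _ hwb
    have hwV : w ∈ V := hpc _ hwaV _ (List.prefix_append _ _)
    have hWw : 0 < W w := hpos _ hwV
    have hWwa : 0 < W (w ++ [a]) := hpos _ hwaV
    have hWwb : 0 < W (w ++ [b]) := hpos _ hwbV
    have hWvQ : 0 < W (cq Q) := hpos _ hvV
    have hWvQ' : 0 < W (cq Q') := hpos _ hv'V
    have hWwaw : W (w ++ [a]) ≤ ε * W w :=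
      Statement16Aux.W_decay hpc hpos hdec hε0 hε2 hwaV (List.prefix_append _ _) (by simp)
    have hWwbw : W (w ++ [b]) ≤ ε * W w :=
      Statement16Aux.W_decay hpc hpos hdec hε0 hε2 hwbV (List.prefix_append _ _) (by simp)
    have hWva : W (cq Q) ≤ W (w ++ [a]) := hWmono _ hvV _ hwa
    have hWvb : W (cq Q') ≤ W (w ++ [b]) := hWmono _ hv'V _ hwb
    obtain ⟨ua, hual, huap, hya⟩ := hyC _ hwaV
    obtain ⟨ub, hubl, hubp, hyb⟩ := hyC _ hwbV
    have hPa := Statement16Aux.Psi_diff_bounds hpc hpos hdec hε0 hε2 helts hN hual.1 huap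
    have hPb := Statement16Aux.Psi_diff_bounds hpc hpos hdec hε0 hε2 helts hN hubl.1 hubp
    have hPsiA : Psi N W (w ++ [a]) = Psi N W w + W w * (a:ℝ)/((N:ℝ)-1) :=
      Statement16Aux.Psi_append (N := N) (W := W)
    have hPsiB : Psi N W (w ++ [b]) = Psi N W w + W w * (b:ℝ)/((N:ℝ)-1) :=
      Statement16Aux.Psi_append (N := N) (W := W)
    have hya0 : y (w ++ [a]) 0 = Psi N W ua := by rw [hya]; rfl
    have hyb0 : y (w ++ [b]) 0 = Psi N W ub := by rw [hyb]; rfl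
    have hN1 : (1:ℝ) ≤ (N:ℝ) - 1 := by linarith
    have hN1pos : (0:ℝ) < (N:ℝ) - 1 := by linarith
    -- lower bound
    have hWN : W w / (N:ℝ) ≤ W w * 1 / ((N:ℝ)-1) := by
      rw [div_le_div_iff₀ hNpos hN1pos]
      nlinarith
    have hlow : W w / (N:ℝ) - 2*W (w++[a]) - 2*W (w++[b]) ≤
        dist (y (w++[a])) (y (w++[b])) := by
      have hcoord := Statement16Aux.dist_coord_le (y (w++[a])) (y (w++[b])) 0
      rw [hya0, hyb0] at hcoord
      have hd : W w * ((b:ℝ) - (a:ℝ)) / ((N:ℝ)-1) =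
          W w * (b:ℝ)/((N:ℝ)-1) - W w * (a:ℝ)/((N:ℝ)-1) := by ring
      rcases lt_or_gt_of_ne hab with hab' | hab'
      · have hba : (1:ℝ) ≤ (b:ℝ) - (a:ℝ) := by
          have hn : a + 1 ≤ b := hab'
          have : ((a:ℝ)) + 1 ≤ (b:ℝ) := by exact_mod_cast hn
          linarith
        have hnum : W w * 1 ≤ W w * ((b:ℝ) - (a:ℝ)) := by nlinarith
        have hdiv : W w * 1 / ((N:ℝ)-1) ≤ W w * ((b:ℝ) - (a:ℝ)) / ((N:ℝ)-1) := by
          rw [div_le_div_iff₀ hN1pos hN1pos]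
          nlinarith
        have habs : -(Psi N W ua - Psi N W ub) ≤ |Psi N W ua - Psi N W ub| := neg_le_abs _
        linarith [hPa.1, hPa.2, hPb.1, hPb.2]
      · have hba : (1:ℝ) ≤ (a:ℝ) - (b:ℝ) := by
          have hn : b + 1 ≤ a := hab'
          have : ((b:ℝ)) + 1 ≤ (a:ℝ) := by exact_mod_cast hn
          linarith
        have hnum : W w * 1 ≤ W w * ((a:ℝ) - (b:ℝ)) := by nlinarith
        have hdiv : W w * 1 / ((N:ℝ)-1) ≤ W w * ((a:ℝ) - (b:ℝ)) / ((N:ℝ)-1) := by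
          rw [div_le_div_iff₀ hN1pos hN1pos]
          nlinarith
        have hd' : W w * ((a:ℝ) - (b:ℝ)) / ((N:ℝ)-1) =
            W w * (a:ℝ)/((N:ℝ)-1) - W w * (b:ℝ)/((N:ℝ)-1) := by ring
        have habs : (Psi N W ua - Psi N W ub) ≤ |Psi N W ua - Psi N W ub| := le_abs_self _
        linarith [hPa.1, hPa.2, hPb.1, hPb.2]
    -- upper bound
    have hda : dist (y (cq Q)) (y (w++[a])) ≤ 2 * W (w++[a]) := hyd _ hvV _ hwa
    have hdb : dist (y (cq Q')) (y (w++[b])) ≤ 2 * W (w++[b]) := hyd _ hv'V _ hwb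
    have hdc : dist (Statement16Aux.cen Q) (y (cq Q)) ≤ κ * 2 * W (cq Q) :=
      Metric.mem_closedBall.1 (hQsub (Statement16Aux.cen_mem Q))
    have hdc' : dist (Statement16Aux.cen Q') (y (cq Q')) ≤ κ * 2 * W (cq Q') :=
      Metric.mem_closedBall.1 (hQ'sub (Statement16Aux.cen_mem Q'))
    have hdcen : dist (Statement16Aux.cen Q) (Statement16Aux.cen Q') ≤
        1.1 * (Q.side + Q'.side) := Statement16Aux.touch_cen_dist ht
    have hsQ : Q.side ≤ 8 * κ * W (cq Q) := hSide Q hQw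
    have hsQ' : Q'.side ≤ 8 * κ * W (cq Q') := hSide Q' hQ'w
    have hup : dist (y (w++[a])) (y (w++[b])) ≤
        2*W (w++[a]) + 2*W (w++[b]) + κ*2*W (cq Q) + κ*2*W (cq Q')
          + 1.1*(Q.side + Q'.side) := by
      have t1 := dist_triangle4 (y (w++[a])) (y (cq Q)) (Statement16Aux.cen Q)
        (Statement16Aux.cen Q')
      have t2 := dist_triangle4 (Statement16Aux.cen Q') (y (cq Q')) (y (w++[b])) (y (w++[b]))
      have t3 := dist_triangle (y (w++[a])) (Statement16Aux.cen Q') (y (w++[b]))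
      rw [dist_comm (y (w++[a])) (y (cq Q))] at t1
      rw [dist_comm (y (cq Q)) (Statement16Aux.cen Q)] at t1
      rw [dist_comm (Statement16Aux.cen Q') (y (cq Q'))] at t2
      simp only [dist_self, add_zero] at t2
      have e1 : dist (y (cq Q')) (Statement16Aux.cen Q') =
          dist (Statement16Aux.cen Q') (y (cq Q')) := dist_comm _ _
      linarith [e1]
    -- products for the contradiction
    have hm1 : κ * W (cq Q) ≤ κ * (ε * W w) := by
      apply mul_le_mul_of_nonneg_left _ hκ0.le
      linarith
    have hm2 : κ * W (cq Q') ≤ κ * (ε * W w) := by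
      apply mul_le_mul_of_nonneg_left _ hκ0.le
      linarith
    have hm3 : ε * W w ≤ κ * (ε * W w) := by nlinarith [mul_pos hε0 hWw]
    -- combine: W w / N ≤ 24 * κ * ε * W w
    have hC1 : W w / (N:ℝ) ≤ 24 * (κ * (ε * W w)) := by nlinarith
    have hC2 : W w ≤ 24 * (κ * (ε * W w)) * (N:ℝ) := by
      rw [div_le_iff₀ hNpos] at hC1
      linarith
    have h5 : κ * (ε * (N:ℝ)) ≤ κ * (1/(200*κ)) := mul_le_mul_of_nonneg_left hεN hκ0.le
    have h6 : κ * (1/(200*κ)) = 1/200 := by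
      field_simp
    have h7 : κ * (ε * (N:ℝ)) * W w ≤ (1/200) * W w := by
      rw [h6] at h5
      exact mul_le_mul_of_nonneg_right h5 hWw.le
    nlinarith
  -- FINALE
  rcases comp with hvp | hvp
  · have hlt : (cq Q).length < (cq Q').length := Statement16Aux.length_lt_of_prefix_ne hvp hne
    have htQQ' : Touch Q' Q := by obtain ⟨x, h1x, h2x⟩ := ht; exact ⟨x, h2x, h1x⟩
    have hk2 := key Q' Q hQ'w hQw htQQ'
    left
    exact Statement16Aux.eq_dropLast_of_prefix hvp (by omega)
  · have hlt : (cq Q').length < (cq Q).length :=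
      Statement16Aux.length_lt_of_prefix_ne hvp (Ne.symm hne)
    have hk2 := key Q Q' hQw hQ'w ht
    right
    exact Statement16Aux.eq_dropLast_of_prefix hvp (by omega)
end

section
/- There is a constant κ₁ > 10 such that for every κ ≥ κ₁ there exist k₀ = k₀(κ) > 0 and constants c(N), C(N) > 0 with the following property. Fix N ≥ 2, an N-ary tree V of depth L ≥ 1, and radially decaying weights with parameter ε ≤ k₀/N; fix y_C ∈ C and B_C = B(y_C, r_C) with r_C = κK₁W_C for each C ∈ 𝒞, where K₁ is an absolute constant with C ⊂ κ^{−1}B_C for all C. Then there exists a family of annuli {A_C}_{C∈𝒞₀}, A_C = {x ∈ ℝ² : r_C ≤ |x − y_C| ≤ 10^{M_C+1}r_C} for some integer M_C ≥ 0, such that: (1) c(N)·W_{π(C)} ≤ 10^{M_C+1}r_C ≤ C(N)·W_{π(C)} for each C ∈ 𝒞₀; (2) A_C ⊂ ½B_{π(C)} for each C ∈ 𝒞₀; and (3) the family {A_C}_{C∈𝒞₀} is pairwise disjoint. -/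
open MeasureTheory Set Metric
open scoped Classical

section Helpers

lemma pt_zero (a b : ℝ) : (pt a b) 0 = a := rfl
lemma pt_one (a b : ℝ) : (pt a b) 1 = b := rfl

lemma abs_fst_le_dist (x y : Pt) : |x 0 - y 0| ≤ dist x y := by
  rw [EuclideanSpace.dist_eq]
  have : |x 0 - y 0| = Real.sqrt (dist (x 0) (y 0) ^ 2) := by
    rw [Real.sqrt_sq_eq_abs, Real.dist_eq, abs_abs]
  rw [this]
  apply Real.sqrt_le_sqrt
  rw [Fin.sum_univ_two]
  have := sq_nonneg (dist (x 1) (y 1))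
  linarith

lemma psi_append (N : ℕ) (W : List ℕ → ℝ) (v : List ℕ) (a : ℕ) :
    Psi N W (v ++ [a]) = Psi N W v + W v * (a : ℝ) / ((N : ℝ) - 1) := by
  unfold Psi
  rw [List.length_append, List.length_singleton, Finset.sum_range_succ]
  congr 1
  · apply Finset.sum_congr rfl
    intro i hi
    rw [Finset.mem_range] at hi
    rw [List.take_append_of_le_length hi.le, List.getD_append _ _ _ _ hi]
  · rw [List.take_append_of_le_length le_rfl, List.take_length]
    congr 2
    simp [List.getD_append_right]

lemma trich (v v' : List ℕ) :
    v <+: v' ∨ v' <+: v ∨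
      ∃ w a a', a ≠ a' ∧ w ++ [a] <+: v ∧ w ++ [a'] <+: v' := by
  induction v generalizing v' with
  | nil => exact Or.inl (List.nil_prefix)
  | cons a vt ih =>
    cases v' with
    | nil => exact Or.inr (Or.inl (List.nil_prefix))
    | cons b v't =>
      by_cases hab : a = b
      · subst hab
        rcases ih v't with h | h | ⟨w, c, c', hne, h1, h2⟩
        · exact Or.inl (List.cons_prefix_cons.mpr ⟨rfl, h⟩)
        · exact Or.inr (Or.inl (List.cons_prefix_cons.mpr ⟨rfl, h⟩))
        · exact Or.inr (Or.inr ⟨a :: w, c, c', hne,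
            by rw [List.cons_append]; exact List.cons_prefix_cons.mpr ⟨rfl, h1⟩,
            by rw [List.cons_append]; exact List.cons_prefix_cons.mpr ⟨rfl, h2⟩⟩)
      · exact Or.inr (Or.inr ⟨[], a, b, hab,
          List.cons_prefix_cons.mpr ⟨rfl, List.nil_prefix⟩,
          List.cons_prefix_cons.mpr ⟨rfl, List.nil_prefix⟩⟩)

end Helpers

section Helpers2

variable {N : ℕ} {V : Finset (List ℕ)} {W : List ℕ → ℝ} {ε : ℝ}

lemma cluster_mono {v w : List ℕ} (h : w <+: v) :
    Cluster N V W v ⊆ Cluster N V W w :=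
  fun _ ⟨u, hl, hp, he⟩ => ⟨u, hl, h.trans hp, he⟩

lemma prefix_dropLast {v u : List ℕ} (h : v <+: u) (hne : v ≠ u) :
    v <+: u.dropLast := by
  refine List.prefix_of_prefix_length_le h (List.dropLast_prefix u) ?_
  have h1 : v.length ≤ u.length := h.length_le
  have h2 : v.length ≠ u.length := fun he => hne (List.prefix_iff_eq_take.mp h ▸ by
    rw [he, List.take_length])
  rw [List.length_dropLast]; omega

lemma W_mono_aux (hV : IsNaryTree N V) (hW : RadiallyDecaying V W ε) (hε1 : ε ≤ 1) :
    ∀ n (u : List ℕ), u.length ≤ n → u ∈ V → ∀ v, v <+: u → W u ≤ W v := by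
  intro n
  induction n with
  | zero =>
    intro u hu _ v hv
    have hu0 : u = [] := List.length_eq_zero_iff.mp (Nat.le_zero.mp hu)
    subst hu0
    have : v = [] := List.prefix_nil.mp hv
    subst this; exact le_rfl
  | succ n ih =>
    intro u hlen huV v hv
    by_cases heq : v = u
    · subst heq; exact le_rfl
    · have hune : u ≠ [] := by
        rintro rfl; exact heq (List.prefix_nil.mp hv)
      have hdV : u.dropLast ∈ V := hV.2.1 u huV _ (List.dropLast_prefix u)
      have hWd : 0 < W u.dropLast := hW.2.1 _ hdV
      have h1 : W u ≤ ε * W u.dropLast := hW.2.2 u huV hune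
      have h2 : ε * W u.dropLast ≤ W u.dropLast := by nlinarith
      have h3 : W u.dropLast ≤ W v := by
        apply ih u.dropLast _ hdV v (prefix_dropLast hv heq)
        rw [List.length_dropLast]; omega
      linarith

lemma W_mono (hV : IsNaryTree N V) (hW : RadiallyDecaying V W ε) (hε1 : ε ≤ 1)
    {u v : List ℕ} (hu : u ∈ V) (h : v <+: u) : W u ≤ W v :=
  W_mono_aux hV hW hε1 u.length u le_rfl hu v h

lemma psi_range_aux (hN : 2 ≤ N) (hV : IsNaryTree N V) (hW : RadiallyDecaying V W ε)
    (hε1 : ε ≤ 1/2) :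
    ∀ n (u : List ℕ), u.length ≤ n → u ∈ V → ∀ v, v <+: u →
      Psi N W v ≤ Psi N W u ∧ Psi N W u + 2 * W u ≤ Psi N W v + 2 * W v := by
  have hNd : (0:ℝ) < (N:ℝ) - 1 := by
    have : (2:ℝ) ≤ (N:ℝ) := by exact_mod_cast hN
    linarith
  intro n
  induction n with
  | zero =>
    intro u hu _ v hv
    have hu0 : u = [] := List.length_eq_zero_iff.mp (Nat.le_zero.mp hu)
    subst hu0
    have : v = [] := List.prefix_nil.mp hv
    subst this; exact ⟨le_rfl, le_rfl⟩
  | succ n ih =>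
    intro u hlen huV v hv
    by_cases heq : v = u
    · subst heq; exact ⟨le_rfl, le_rfl⟩
    · have hune : u ≠ [] := by
        rintro rfl; exact heq (List.prefix_nil.mp hv)
      set u' := u.dropLast with hu'
      set c := u.getLast hune with hc
      have hdV : u' ∈ V := hV.2.1 u huV _ (List.dropLast_prefix u)
      have hWd : 0 < W u' := hW.2.1 _ hdV
      have hrec : u' ++ [c] = u := List.dropLast_append_getLast hune
      have hcN : c < N := hV.2.2.1 u huV c (hrec ▸ List.mem_append_right _ (List.mem_singleton_self c))
      have hcR : (c:ℝ) ≤ (N:ℝ) - 1 := by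
        have : (c:ℝ) + 1 ≤ (N:ℝ) := by exact_mod_cast hcN
        linarith
      have hPsi : Psi N W u = Psi N W u' + W u' * (c:ℝ) / ((N:ℝ) - 1) := by
        conv_lhs => rw [← hrec]
        exact psi_append N W u' c
      have hterm0 : 0 ≤ W u' * (c:ℝ) / ((N:ℝ) - 1) := by positivity
      have hterm1 : W u' * (c:ℝ) / ((N:ℝ) - 1) ≤ W u' := by
        rw [div_le_iff₀ hNd]
        nlinarith
      have hWu : W u ≤ ε * W u' := hW.2.2 u huV hune
      have hih := ih u' (by rw [hu', List.length_dropLast]; omega) hdV v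
        (prefix_dropLast hv heq)
      have hε0' : 0 < W u := hW.2.1 u huV
      constructor
      · linarith [hih.1]
      · have : 2 * W u ≤ W u' := by nlinarith
        linarith [hih.2]

lemma psi_range (hN : 2 ≤ N) (hV : IsNaryTree N V) (hW : RadiallyDecaying V W ε)
    (hε1 : ε ≤ 1/2) {u v : List ℕ} (hu : u ∈ V) (h : v <+: u) :
    Psi N W v ≤ Psi N W u ∧ Psi N W u + 2 * W u ≤ Psi N W v + 2 * W v :=
  psi_range_aux hN hV hW hε1 u.length u le_rfl hu v h

lemma cluster_range (hN : 2 ≤ N) (hV : IsNaryTree N V) (hW : RadiallyDecaying V W ε)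
    (hε1 : ε ≤ 1/2) {v : List ℕ} {x : Pt} (hx : x ∈ Cluster N V W v) :
    Psi N W v ≤ x 0 ∧ x 0 ≤ Psi N W v + 2 * W v := by
  obtain ⟨u, hu, hp, rfl⟩ := hx
  have h := psi_range hN hV hW hε1 hu.1 hp
  have hWu : 0 < W u := hW.2.1 u hu.1
  constructor
  · exact h.1
  · show Psi N W u ≤ _
    linarith [h.2]

lemma cluster_sep (hN : 2 ≤ N) (hV : IsNaryTree N V) (hW : RadiallyDecaying V W ε)
    (hε1 : ε ≤ 1/2) (hεN : ε ≤ 1/(4*N)) {w : List ℕ} {a a' : ℕ} (haa : a < a')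
    (hwa : w ++ [a] ∈ V) (hwa' : w ++ [a'] ∈ V) {x x' : Pt}
    (hx : x ∈ Cluster N V W (w ++ [a])) (hx' : x' ∈ Cluster N V W (w ++ [a'])) :
    W w / (2*N) ≤ x' 0 - x 0 := by
  have hNd : (0:ℝ) < (N:ℝ) - 1 := by
    have : (2:ℝ) ≤ (N:ℝ) := by exact_mod_cast hN
    linarith
  have hN0 : (0:ℝ) < (N:ℝ) := by linarith
  have hwV : w ∈ V := hV.2.1 _ hwa w (List.prefix_append w [a])
  have hWw : 0 < W w := hW.2.1 w hwV
  have hdrop : (w ++ [a]).dropLast = w := by simp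
  have hWwa : W (w ++ [a]) ≤ ε * W w := by
    have := hW.2.2 (w ++ [a]) hwa (by simp)
    rwa [hdrop] at this
  have h1 := (cluster_range hN hV hW hε1 hx).2
  have h2 := (cluster_range hN hV hW hε1 hx').1
  rw [psi_append] at h1
  rw [psi_append] at h2
  have haaR : (a:ℝ) + 1 ≤ (a':ℝ) := by exact_mod_cast haa
  have e1 : W w * (a':ℝ) / ((N:ℝ)-1) - W w * (a:ℝ) / ((N:ℝ)-1)
      = W w * ((a':ℝ) - a) / ((N:ℝ)-1) := by ring
  have e2 : W w / (N:ℝ) ≤ W w * ((a':ℝ) - a) / ((N:ℝ)-1) := by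
    rw [div_le_div_iff₀ hN0 hNd]
    nlinarith [mul_le_mul_of_nonneg_left haaR (mul_nonneg hWw.le hN0.le), mul_pos hWw hN0]
  have e3 : 2 * W (w ++ [a]) ≤ W w / (2*(N:ℝ)) := by
    have hε2 : ε * W w ≤ (1/(4*(N:ℝ))) * W w := mul_le_mul_of_nonneg_right hεN hWw.le
    have : (1/(4*(N:ℝ))) * W w = W w / (4*N) := by ring
    have h4 : W w / (4*(N:ℝ)) ≤ W w / (2*(2*N)) := by rw [show (2:ℝ)*(2*N) = 4*N by ring]
    have h5 : W w / (2*(2*(N:ℝ))) = W w / (2*N) / 2 := by ring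
    nlinarith [hWwa]
  have e4 : W w / (2*(N:ℝ)) + W w / (2*(N:ℝ)) = W w / (N:ℝ) := by ring
  linarith

end Helpers2

set_option maxHeartbeats 2000000 in
/-- the family of annuli used in the proof of Lemma 9 of the paper. -/
theorem statement18 :
    ∃ K₁ κ₁ : ℝ, 1 < K₁ ∧ 10 < κ₁ ∧
      ∀ κ : ℝ, κ₁ ≤ κ →
        ∃ k₀ : ℝ, 0 < k₀ ∧
          ∀ N : ℕ, 2 ≤ N →
            ∃ c Cc : ℝ, 0 < c ∧ 0 < Cc ∧
              ∀ (V : Finset (List ℕ)) (W : List ℕ → ℝ) (ε : ℝ) (y : List ℕ → Pt),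
                TreeHyp k₀ N V W ε → DepthAtLeastOne V →
                (∀ v ∈ V, y v ∈ Cluster N V W v) →
                (∀ v ∈ V, Cluster N V W v ⊆ closedBall (y v) (K₁ * W v)) →
                ∃ M : List ℕ → ℕ,
                  (∀ v ∈ V, v ≠ [] →
                    c * W v.dropLast ≤ (10 : ℝ) ^ (M v + 1) * (κ * K₁ * W v) ∧
                    (10 : ℝ) ^ (M v + 1) * (κ * K₁ * W v) ≤ Cc * W v.dropLast) ∧
                  (∀ v ∈ V, v ≠ [] →
                    {x : Pt | κ * K₁ * W v ≤ dist x (y v) ∧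
                        dist x (y v) ≤ (10 : ℝ) ^ (M v + 1) * (κ * K₁ * W v)} ⊆
                      closedBall (y v.dropLast) (κ * K₁ * W v.dropLast / 2)) ∧
                  (∀ v ∈ V, v ≠ [] → ∀ v' ∈ V, v' ≠ [] →
                    Cluster N V W v ≠ Cluster N V W v' →
                      {x : Pt | κ * K₁ * W v ≤ dist x (y v) ∧
                          dist x (y v) ≤ (10 : ℝ) ^ (M v + 1) * (κ * K₁ * W v)} ∩
                        {x : Pt | κ * K₁ * W v' ≤ dist x (y v') ∧
                          dist x (y v') ≤ (10 : ℝ) ^ (M v' + 1) * (κ * K₁ * W v')} =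
                        ∅) := by
  classical
  refine ⟨2, 11, by norm_num, by norm_num, ?_⟩
  intro κ hκ
  have hκ0 : (0:ℝ) < κ := by linarith
  refine ⟨1/(160*κ), by positivity, ?_⟩
  intro N hN
  have hNR : (2:ℝ) ≤ (N:ℝ) := by exact_mod_cast hN
  have hN0 : (0:ℝ) < (N:ℝ) := by linarith
  refine ⟨1/(80*(N:ℝ)), 1/(8*(N:ℝ)), by positivity, by positivity, ?_⟩
  intro V W ε y hyp hdepth hy hball
  obtain ⟨hN2, hV, hε0, hεk, hW⟩ := hyp
  have hWpos := hW.2.1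
  have hεN' : ε ≤ 1/(160*κ*N) := by
    rw [show (1:ℝ)/(160*κ*N) = (1/(160*κ))/N from by rw [div_div]]
    exact hεk
  have h160 : (0:ℝ) < 160*κ*N := by positivity
  have hε1 : ε ≤ 1/2 := by
    have : (1:ℝ)/(160*κ*N) ≤ 1/2 := by
      rw [div_le_div_iff₀ h160 (by norm_num)]
      nlinarith
    linarith
  have hε4N : ε ≤ 1/(4*N) := by
    have : (1:ℝ)/(160*κ*N) ≤ 1/(4*N) := by
      rw [div_le_div_iff₀ h160 (by positivity)]
      nlinarith
    linarith
  have hεone : ε ≤ 1 := by linarith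
  -- the choice of M
  obtain ⟨Mf, key⟩ : ∃ Mf : List ℕ → ℕ, ∀ v ∈ V, v ≠ [] →
      1/(80*(N:ℝ)) * W v.dropLast ≤ (10:ℝ) ^ (Mf v + 1) * (κ * 2 * W v) ∧
      (10:ℝ) ^ (Mf v + 1) * (κ * 2 * W v) ≤ 1/(8*(N:ℝ)) * W v.dropLast := by
    refine ⟨fun v => Nat.log 10 ⌊W v.dropLast / (16*N*κ*W v)⌋₊ - 1, ?_⟩
    intro v hv hvne
    simp only
    have hdV : v.dropLast ∈ V := hV.2.1 v hv _ (List.dropLast_prefix v)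
    have hWv : 0 < W v := hWpos v hv
    have hWd : 0 < W v.dropLast := hWpos _ hdV
    set t : ℝ := W v.dropLast / (16*N*κ*W v) with ht
    have ht0 : 0 < t := by positivity
    have h10t : (10:ℝ) ≤ t := by
      rw [le_div_iff₀ (by positivity)]
      have h1 : W v ≤ ε * W v.dropLast := hW.2.2 v hv hvne
      have hεq : ε * (160*κ*(N:ℝ)) ≤ 1 := (le_div_iff₀ h160).mp hεN'
      nlinarith [mul_le_mul_of_nonneg_left h1 h160.le,
        mul_le_mul_of_nonneg_right hεq hWd.le]
    set n := ⌊t⌋₊ with hn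
    have hn10 : 10 ≤ n := Nat.le_floor (by exact_mod_cast h10t)
    set m := Nat.log 10 n with hm
    have hm1 : 1 ≤ m := Nat.log_pos (by norm_num) hn10
    have hmn : (10:ℝ)^m ≤ t := by
      have h1 : (10:ℕ)^m ≤ n := Nat.pow_log_le_self 10 (by omega)
      have h2 : (n:ℝ) ≤ t := Nat.floor_le ht0.le
      calc (10:ℝ)^m = ((10^m : ℕ):ℝ) := by push_cast; ring
        _ ≤ (n:ℝ) := by exact_mod_cast h1
        _ ≤ t := h2
    have htm : t ≤ (10:ℝ)^(m+1) := by
      have h1 : n < 10^(m+1) := Nat.lt_pow_succ_log_self (by norm_num) n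
      have h2 : t < (n:ℝ) + 1 := Nat.lt_floor_add_one t
      have h3 : n + 1 ≤ 10^(m+1) := h1
      calc t ≤ ((n:ℝ)+1) := h2.le
        _ = ((n+1 : ℕ):ℝ) := by push_cast; ring
        _ ≤ ((10^(m+1) : ℕ):ℝ) := by exact_mod_cast h3
        _ = (10:ℝ)^(m+1) := by push_cast; ring
    have he : t * (16*N*κ*W v) = W v.dropLast := by
      rw [ht]
      exact div_mul_cancel₀ _ (by positivity : (0:ℝ) < 16*N*κ*W v).ne'
    rw [Nat.sub_add_cancel hm1]
    constructor
    · have h1 := mul_le_mul_of_nonneg_right htm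
        (by positivity : (0:ℝ) ≤ 16*N*κ*W v)
      rw [he, pow_succ] at h1
      rw [one_div, inv_mul_le_iff₀ (by positivity : (0:ℝ) < 80*(N:ℝ))]
      nlinarith
    · have h1 := mul_le_mul_of_nonneg_right hmn
        (by positivity : (0:ℝ) ≤ 16*N*κ*W v)
      rw [he] at h1
      rw [show (1:ℝ)/(8*(N:ℝ)) * W v.dropLast = W v.dropLast / (8*N) from by ring,
        le_div_iff₀ (by positivity : (0:ℝ) < 8*(N:ℝ))]
      nlinarith
  -- prefix case for disjointness
  have casePrefix : ∀ v ∈ V, v ≠ [] → ∀ v' ∈ V, v' ≠ [] → v <+: v' → v ≠ v' →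
      ∀ x : Pt, κ * 2 * W v ≤ dist x (y v) →
        dist x (y v') ≤ (10:ℝ) ^ (Mf v' + 1) * (κ * 2 * W v') → False := by
    intro v hv hvne v' hv' hv'ne hpre hne x hxv hxv'
    have hπ' : v'.dropLast ∈ V := hV.2.1 v' hv' _ (List.dropLast_prefix v')
    have hWv : 0 < W v := hWpos v hv
    have hWπ' : W v'.dropLast ≤ W v :=
      W_mono hV hW hεone hπ' (prefix_dropLast hpre hne)
    have hR : dist x (y v') ≤ 1/(8*(N:ℝ)) * W v'.dropLast :=
      le_trans hxv' (key v' hv' hv'ne).2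
    have hyy : dist (y v') (y v) ≤ 2 * W v := by
      have h1 : y v' ∈ Cluster N V W v := cluster_mono hpre (hy v' hv')
      have := hball v hv h1
      rwa [mem_closedBall] at this
    have h8 : (1:ℝ)/(8*N) * W v'.dropLast ≤ W v := by
      have h1 : (1:ℝ)/(8*N) ≤ 1 := by
        rw [div_le_one (by positivity)]; linarith
      nlinarith [hWpos _ hπ']
    have htri := dist_triangle x (y v') (y v)
    nlinarith [mul_le_mul_of_nonneg_right hκ hWv.le]
  -- split case for disjointness
  have caseSplit : ∀ v ∈ V, v ≠ [] → ∀ v' ∈ V, v' ≠ [] → ∀ w a a', a < a' →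
      w ++ [a] <+: v → w ++ [a'] <+: v' →
      ∀ x : Pt, dist x (y v) ≤ (10:ℝ) ^ (Mf v + 1) * (κ * 2 * W v) →
        dist x (y v') ≤ (10:ℝ) ^ (Mf v' + 1) * (κ * 2 * W v') → False := by
    intro v hv hvne v' hv' hv'ne w a a' haa h1 h2 x hxv hxv'
    have hwa : w ++ [a] ∈ V := hV.2.1 v hv _ h1
    have hwa' : w ++ [a'] ∈ V := hV.2.1 v' hv' _ h2
    have hwV : w ∈ V := hV.2.1 _ hwa w (List.prefix_append w [a])
    have hWw : 0 < W w := hWpos w hwV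
    have hyv : y v ∈ Cluster N V W (w ++ [a]) := cluster_mono h1 (hy v hv)
    have hyv' : y v' ∈ Cluster N V W (w ++ [a']) := cluster_mono h2 (hy v' hv')
    have hsep : W w / (2*N) ≤ (y v') 0 - (y v) 0 :=
      cluster_sep hN hV hW hε1 hε4N haa hwa hwa' hyv hyv'
    have habs : |(y v') 0 - (y v) 0| ≤ dist (y v') (y v) := abs_fst_le_dist _ _
    have hle : (y v') 0 - (y v) 0 ≤ |(y v') 0 - (y v) 0| := le_abs_self _
    -- W (dropLast) ≤ W w
    have hwπ : w <+: v.dropLast := by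
      refine List.prefix_of_prefix_length_le ((List.prefix_append w [a]).trans h1)
        (List.dropLast_prefix v) ?_
      have := h1.length_le
      rw [List.length_append, List.length_singleton] at this
      rw [List.length_dropLast]; omega
    have hwπ' : w <+: v'.dropLast := by
      refine List.prefix_of_prefix_length_le ((List.prefix_append w [a']).trans h2)
        (List.dropLast_prefix v') ?_
      have := h2.length_le
      rw [List.length_append, List.length_singleton] at this
      rw [List.length_dropLast]; omega
    have hπ : v.dropLast ∈ V := hV.2.1 v hv _ (List.dropLast_prefix v)
    have hπ' : v'.dropLast ∈ V := hV.2.1 v' hv' _ (List.dropLast_prefix v')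
    have hWπ : W v.dropLast ≤ W w := W_mono hV hW hεone hπ hwπ
    have hWπ' : W v'.dropLast ≤ W w := W_mono hV hW hεone hπ' hwπ'
    have h18 : (0:ℝ) ≤ 1/(8*(N:ℝ)) := by positivity
    have hRv : dist x (y v) ≤ 1/(8*(N:ℝ)) * W w :=
      le_trans (le_trans hxv (key v hv hvne).2) (mul_le_mul_of_nonneg_left hWπ h18)
    have hRv' : dist x (y v') ≤ 1/(8*(N:ℝ)) * W w :=
      le_trans (le_trans hxv' (key v' hv' hv'ne).2) (mul_le_mul_of_nonneg_left hWπ' h18)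
    have htri := dist_triangle (y v') x (y v)
    have hdc : dist (y v') x = dist x (y v') := dist_comm _ _
    have hcmp : 1/(8*(N:ℝ)) * W w + 1/(8*(N:ℝ)) * W w < W w / (2*N) := by
      rw [show (1:ℝ)/(8*N) * W w + 1/(8*N) * W w = W w * 2 / (8*N) from by ring,
        div_lt_div_iff₀ (by positivity) (by positivity)]
      nlinarith
    linarith
  refine ⟨Mf, ?_, ?_, ?_⟩
  · intro v hv hvne
    exact key v hv hvne
  · intro v hv hvne x hx
    obtain ⟨hx1, hx2⟩ := hx
    have hdV : v.dropLast ∈ V := hV.2.1 v hv _ (List.dropLast_prefix v)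
    have hWd : 0 < W v.dropLast := hWpos _ hdV
    have h1 : dist x (y v) ≤ 1/(8*(N:ℝ)) * W v.dropLast :=
      le_trans hx2 (key v hv hvne).2
    have h2 : dist (y v) (y v.dropLast) ≤ 2 * W v.dropLast := by
      have h3 : y v ∈ Cluster N V W v.dropLast :=
        cluster_mono (List.dropLast_prefix v) (hy v hv)
      have := hball v.dropLast hdV h3
      rwa [mem_closedBall] at this
    rw [mem_closedBall]
    have htri := dist_triangle x (y v) (y v.dropLast)
    have h8 : (1:ℝ)/(8*N) * W v.dropLast ≤ W v.dropLast := by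
      have h4 : (1:ℝ)/(8*N) ≤ 1 := by
        rw [div_le_one (by positivity)]; linarith
      nlinarith
    nlinarith [mul_le_mul_of_nonneg_right hκ hWd.le]
  · intro v hv hvne v' hv' hv'ne hCC
    rw [Set.eq_empty_iff_forall_notMem]
    rintro x ⟨⟨hx1, hx2⟩, ⟨hx1', hx2'⟩⟩
    rcases trich v v' with h | h | ⟨w, a, a', hne, h1, h2⟩
    · have hvv' : v ≠ v' := by rintro rfl; exact hCC rfl
      exact casePrefix v hv hvne v' hv' hv'ne h hvv' x hx1 hx2'
    · have hvv' : v' ≠ v := by rintro rfl; exact hCC rfl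
      exact casePrefix v' hv' hv'ne v hv hvne h hvv' x hx1' hx2
    · rcases lt_or_gt_of_ne hne with hlt | hgt
      · exact caseSplit v hv hvne v' hv' hv'ne w a a' hlt h1 h2 x hx2 hx2'
      · exact caseSplit v' hv' hv'ne v hv hvne w a' a hgt h2 h1 x hx2' hx2
end
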